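/- arXiv:1512.05966 — 2 statements merged into one kernel-verified Lean document; each statement's English description precedes it below -/
import Mathlib

section
/- The set 𝓟₁ of sequences of everywhere converging martingales whose associated functions converge pointwise, 𝓟₁ := {(f_k)_{k∈ℕ} ∈ 𝓟^ℕ : for every β ∈ 2^ω the sequence (ψ(f_k)(β))_{k∈ℕ} converges in ℝ}, is Π¹₁-complete: 𝓟₁ is a coanalytic subset of the Polish space ([0,1]^{2^{<ω}})^ℕ, and for every coanalytic subset A of 2^ω there is a continuous map g : 2^ω → 𝓜^ℕ with A = g⁻¹(𝓟₁). -/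
open MeasureTheory Filter Topology
open scoped ENNReal

/-- The basic cylinder `N_s` determined by a finite binary sequence `s`:
the set of all `β ∈ 2^ω` extending `s`. -/
def cyl (s : List Bool) : Set (ℕ → Bool) :=
  {β | ∀ i : Fin s.length, β i = s.get i}

/-- The initial segment `β↾l` of `β ∈ 2^ω`, as a finite binary sequence. -/
def seg (β : ℕ → Bool) (l : ℕ) : List Bool := List.ofFn (fun i : Fin l => β i)

/-- A martingale: a `[0,1]`-valued function on finite binary sequences with
`f(s) = (f(s⌢0) + f(s⌢1))/2`. -/
def IsMartingale (f : List Bool → ℝ) : Prop :=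
  (∀ s, f s ∈ Set.Icc (0:ℝ) 1) ∧
  ∀ s, f s = (f (s ++ [false]) + f (s ++ [true])) / 2

/-- The oscillation `osc(f,β) = inf_N sup_{p,q ≥ N} |f(β↾p) − f(β↾q)|`. -/
noncomputable def osc (f : List Bool → ℝ) (β : ℕ → Bool) : ℝ :=
  ⨅ N : ℕ, ⨆ p : {n : ℕ // N ≤ n}, ⨆ q : {n : ℕ // N ≤ n},
    |f (seg β p.1) - f (seg β q.1)|

/-- The set of divergence `D(f) = {β : osc(f,β) > 0}`. -/
def divSet (f : List Bool → ℝ) : Set (ℕ → Bool) := {β | 0 < osc f β}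

/-- `M` has density 1 at `β`: `λ(M ∩ N_{β↾l}) / λ(N_{β↾l}) → 1`. -/
def densityOne (μ : Measure (ℕ → Bool)) (M : Set (ℕ → Bool)) (β : ℕ → Bool) : Prop :=
  Tendsto (fun l : ℕ => μ (M ∩ cyl (seg β l)) / μ (cyl (seg β l))) atTop (𝓝 1)

/-- A set is `Σ⁰₃` iff it is a countable union of `Gδ` sets. -/
def IsSigma03 {X : Type*} [TopologicalSpace X] (S : Set X) : Prop :=
  ∃ g : ℕ → Set X, (∀ n, IsGδ (g n)) ∧ S = ⋃ n, g n

/-- A set is coanalytic (`Π¹₁`) iff its complement is analytic. -/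
def IsCoanalytic {X : Type*} [TopologicalSpace X] (S : Set X) : Prop :=
  MeasureTheory.AnalyticSet Sᶜ

/-- The associated (partial) function of a martingale: `ψ(f)(β) = lim_l f(β↾l)`
(a junk value if the limit does not exist). -/
noncomputable def psi (f : List Bool → ℝ) (β : ℕ → Bool) : ℝ :=
  limUnder atTop (fun l => f (seg β l))

/-- The compact space `𝓜` of martingales, as a subspace of `[0,1]^{2^{<ω}}`. -/
abbrev Mart := {f : List Bool → ℝ // IsMartingale f}

/-- The set `𝓟` of everywhere converging martingales. -/
def Pconv : Set Mart := {f | ∀ β : ℕ → Bool, osc f.1 β = 0}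

/-- `𝓟₁`: sequences of everywhere converging martingales whose associated
functions converge pointwise. -/
def Pone : Set (ℕ → Mart) :=
  {F | (∀ k, F k ∈ Pconv) ∧
    ∀ β : ℕ → Bool, ∃ L : ℝ, Tendsto (fun k => psi (F k).1 β) atTop (𝓝 L)}


/-! ## Auxiliary machinery -/

lemma seg_length (β : ℕ → Bool) (l : ℕ) : (seg β l).length = l := by
  simp [seg]

lemma seg_succ (β : ℕ → Bool) (l : ℕ) : seg β (l+1) = seg β l ++ [β l] := by
  rw [seg, List.ofFn_succ', List.concat_eq_append]
  rfl

section oscsec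
variable {f : List Bool → ℝ} {β : ℕ → Bool}

lemma osc_sup_bdd (hb : ∀ s, f s ∈ Set.Icc (0:ℝ) 1) (p q : List Bool) :
    |f p - f q| ≤ 1 := by
  have h1 := hb p; have h2 := hb q
  rw [abs_sub_le_iff]
  constructor <;> [linarith [h1.1, h1.2, h2.1, h2.2]; linarith [h1.1, h1.2, h2.1, h2.2]]

private lemma inner_le (hb : ∀ s, f s ∈ Set.Icc (0:ℝ) 1) (N : ℕ) :
    ∀ p : {n : ℕ // N ≤ n},
      (⨆ q : {n : ℕ // N ≤ n}, |f (seg β p.1) - f (seg β q.1)|) ≤ 1 :=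
  fun p => ciSup_le (fun q => osc_sup_bdd hb _ _)

private lemma term_le_sup (hb : ∀ s, f s ∈ Set.Icc (0:ℝ) 1) (N : ℕ)
    (p q : {n : ℕ // N ≤ n}) :
    |f (seg β p.1) - f (seg β q.1)| ≤
      ⨆ p : {n : ℕ // N ≤ n}, ⨆ q : {n : ℕ // N ≤ n}, |f (seg β p.1) - f (seg β q.1)| := by
  have h1 : |f (seg β p.1) - f (seg β q.1)| ≤
      ⨆ q : {n : ℕ // N ≤ n}, |f (seg β p.1) - f (seg β q.1)| :=
    le_ciSup (f := fun q : {n : ℕ // N ≤ n} => |f (seg β p.1) - f (seg β q.1)|)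
      ⟨1, by rintro x ⟨q, rfl⟩; exact osc_sup_bdd hb _ _⟩ q
  refine h1.trans ?_
  exact le_ciSup (f := fun p : {n : ℕ // N ≤ n} =>
      ⨆ q : {n : ℕ // N ≤ n}, |f (seg β p.1) - f (seg β q.1)|)
    ⟨1, by rintro x ⟨p, rfl⟩; exact inner_le hb N p⟩ p

private lemma sup_nonneg' (hb : ∀ s, f s ∈ Set.Icc (0:ℝ) 1) (N : ℕ) :
    (0:ℝ) ≤ ⨆ p : {n : ℕ // N ≤ n}, ⨆ q : {n : ℕ // N ≤ n},
      |f (seg β p.1) - f (seg β q.1)| := by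
  have := term_le_sup (β := β) hb N ⟨N, le_rfl⟩ ⟨N, le_rfl⟩
  simpa using (abs_nonneg _).trans this

lemma osc_nonneg (hb : ∀ s, f s ∈ Set.Icc (0:ℝ) 1) : 0 ≤ osc f β :=
  le_ciInf (fun N => sup_nonneg' hb N)

lemma osc_le_of_forall (hb : ∀ s, f s ∈ Set.Icc (0:ℝ) 1) {N : ℕ} {ε : ℝ}
    (h : ∀ p q, N ≤ p → N ≤ q → |f (seg β p) - f (seg β q)| ≤ ε) :
    osc f β ≤ ε := by
  have hS : (⨆ p : {n : ℕ // N ≤ n}, ⨆ q : {n : ℕ // N ≤ n},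
      |f (seg β p.1) - f (seg β q.1)|) ≤ ε :=
    ciSup_le fun p => ciSup_le fun q => h p.1 q.1 p.2 q.2
  refine le_trans (ciInf_le ⟨0, ?_⟩ N) hS
  rintro x ⟨M, rfl⟩; exact sup_nonneg' hb M

lemma osc_eq_zero_iff (hb : ∀ s, f s ∈ Set.Icc (0:ℝ) 1) :
    osc f β = 0 ↔ ∀ ε : ℝ, 0 < ε → ∃ N : ℕ, ∀ p q, N ≤ p → N ≤ q →
      |f (seg β p) - f (seg β q)| ≤ ε := by
  constructor
  · intro h ε hε
    by_contra hc
    push_neg at hc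
    have hge : ε ≤ osc f β := by
      refine le_ciInf fun N => ?_
      obtain ⟨p, q, hp, hq, hlt⟩ := hc N
      exact le_trans hlt.le (term_le_sup hb N ⟨p, hp⟩ ⟨q, hq⟩)
    rw [h] at hge; linarith
  · intro h
    refine le_antisymm ?_ (osc_nonneg hb)
    refine le_of_forall_pos_le_add fun ε hε => ?_
    obtain ⟨N, hN⟩ := h ε hε
    simpa using osc_le_of_forall hb hN

lemma osc_eq_zero_of_eventually_const (hb : ∀ s, f s ∈ Set.Icc (0:ℝ) 1)
    {N : ℕ} {v : ℝ} (h : ∀ l, N ≤ l → f (seg β l) = v) : osc f β = 0 := by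
  rw [osc_eq_zero_iff hb]
  intro ε hε
  exact ⟨N, fun p q hp hq => by rw [h p hp, h q hq]; simpa using hε.le⟩

lemma osc_ge_of_often (hb : ∀ s, f s ∈ Set.Icc (0:ℝ) 1) {δ : ℝ}
    (h : ∀ N : ℕ, ∃ p q, N ≤ p ∧ N ≤ q ∧ δ ≤ |f (seg β p) - f (seg β q)|) :
    δ ≤ osc f β := by
  refine le_ciInf fun N => ?_
  obtain ⟨p, q, hp, hq, hd⟩ := h N
  exact hd.trans (term_le_sup hb N ⟨p, hp⟩ ⟨q, hq⟩)
end oscsec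

inductive MSt where
  | entry : List ℕ → MSt
  | spine : List ℕ → ℕ → MSt
  | frozen : ℝ → MSt

noncomputable def mval (k : ℕ) : ℝ := if k % 2 = 0 then 3/8 else 5/8

noncomputable def mfrz (k : ℕ) : ℝ := 2 * mval k - mval (k+1)

open scoped Classical in
noncomputable def stepT (T : List ℕ → Prop) : MSt → Bool → MSt
  | .entry s, false => .frozen (mfrz s.length)
  | .entry s, true => .spine s 0
  | .spine s m, false => .spine s (m+1)
  | .spine s m, true =>
      if T (s ++ [m]) then .entry (s ++ [m]) else .frozen (mval (s.length+1))
  | .frozen v, _ => .frozen v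

noncomputable def sval : MSt → ℝ
  | .entry s => mval s.length
  | .spine s _ => mval (s.length + 1)
  | .frozen v => v

open scoped Classical in
noncomputable def runT (T : List ℕ → Prop) (σ : List Bool) : MSt :=
  σ.foldl (stepT T) (if T [] then .entry [] else .frozen (mval 0))

noncomputable def mgale (T : List ℕ → Prop) (σ : List Bool) : ℝ := sval (runT T σ)

lemma runT_append (T : List ℕ → Prop) (σ τ : List Bool) :
    runT T (σ ++ τ) = τ.foldl (stepT T) (runT T σ) := by
  simp [runT, List.foldl_append]

lemma runT_concat (T : List ℕ → Prop) (σ : List Bool) (b : Bool) :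
    runT T (σ ++ [b]) = stepT T (runT T σ) b := by
  simp [runT_append]

lemma mval_mem : ∀ k, mval k ∈ Set.Icc (0:ℝ) 1 := by
  intro k; unfold mval; split <;> norm_num

lemma mval_succ (k : ℕ) : mval (k+1) = if k % 2 = 0 then (5/8 : ℝ) else 3/8 := by
  rcases Nat.even_or_odd k with h | h
  · have h0 : k % 2 = 0 := Nat.even_iff.mp h
    have h1 : (k+1) % 2 = 1 := by omega
    simp [mval, h0, h1]
  · have h0 : k % 2 = 1 := Nat.odd_iff.mp h
    have h1 : (k+1) % 2 = 0 := by omega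
    simp [mval, h0, h1]

lemma mfrz_mem (k : ℕ) : mfrz k ∈ Set.Icc (0:ℝ) 1 := by
  unfold mfrz
  rw [mval_succ]
  unfold mval
  split <;> simp <;> norm_num

lemma abs_mval_sub (k : ℕ) : |mval k - mval (k+1)| = 1/4 := by
  rw [mval_succ]; unfold mval; split <;> rw [abs_sub_comm] <;> norm_num

lemma sval_mem (T : List ℕ → Prop) (σ : List Bool) :
    sval (runT T σ) ∈ Set.Icc (0:ℝ) 1 := by
  induction σ using List.reverseRecOn with
  | nil =>
      by_cases h : T [] <;> simp [runT, h, sval] <;> [skip; exact mval_mem 0] <;>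
        simpa using mval_mem 0
  | append_singleton σ b ih =>
      rw [runT_concat]
      rcases hst : runT T σ with ⟨s⟩ | ⟨s, m⟩ | ⟨v⟩
      · cases b
        · simpa [stepT, sval] using mfrz_mem s.length
        · simpa [stepT, sval] using mval_mem (s.length + 1)
      · cases b
        · simpa [stepT, sval] using mval_mem (s.length + 1)
        · simp only [stepT]
          split
          · simpa [sval, List.length_append] using mval_mem (s.length + 1)
          · simpa [sval] using mval_mem (s.length + 1)
      · rw [hst] at ih; cases b <;> simpa [stepT, sval] using ih

lemma sval_stepT_true_spine (T : List ℕ → Prop) (s : List ℕ) (m : ℕ) :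
    sval (stepT T (.spine s m) true) = mval (s.length + 1) := by
  simp only [stepT]
  split <;> simp [sval, List.length_append]

lemma isMartingale_mgale (T : List ℕ → Prop) :
    (∀ s, mgale T s ∈ Set.Icc (0:ℝ) 1) ∧
      ∀ s, mgale T s = (mgale T (s ++ [false]) + mgale T (s ++ [true])) / 2 := by
  constructor
  · intro σ; exact sval_mem T σ
  · intro σ
    unfold mgale
    rw [runT_concat, runT_concat]
    rcases runT T σ with ⟨s⟩ | ⟨s, m⟩ | ⟨v⟩
    · simp [stepT, sval, mfrz]
    · rw [sval_stepT_true_spine]; simp [stepT, sval]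
    · simp [stepT, sval]


/-! ### Run analysis -/

def decSt : MSt → Option (List ℕ)
  | .entry s => some s
  | .spine s _ => some s
  | .frozen _ => none

section runsec
variable {T : List ℕ → Prop} {β' : ℕ → Bool}

lemma st_succ (T : List ℕ → Prop) (β' : ℕ → Bool) (l : ℕ) :
    runT T (seg β' (l+1)) = stepT T (runT T (seg β' l)) (β' l) := by
  rw [seg_succ, runT_concat]

lemma frozen_absorb {l : ℕ} {v : ℝ} (h : runT T (seg β' l) = .frozen v) :
    ∀ d, runT T (seg β' (l + d)) = .frozen v := by
  intro d
  induction d with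
  | zero => simpa using h
  | succ d ih => rw [← Nat.add_assoc, st_succ, ih]; cases β' (l + d) <;> simp [stepT]

lemma entry_T : ∀ (σ : List Bool) (s : List ℕ), runT T σ = .entry s → T s := by
  intro σ
  induction σ using List.reverseRecOn with
  | nil =>
      intro s h
      by_cases hT : T []
      · simp [runT, hT] at h; subst h; exact hT
      · simp [runT, hT] at h
  | append_singleton σ b ih =>
      intro s h
      rw [runT_concat] at h
      rcases hst : runT T σ with ⟨t⟩ | ⟨t, m⟩ | ⟨v⟩ <;> rw [hst] at h
      · cases b <;> simp [stepT] at h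
      · cases b
        · simp [stepT] at h
        · simp only [stepT] at h
          split at h
          · obtain rfl : t ++ [m] = s := by simpa using h
            assumption
          · simp at h
      · cases b <;> simp [stepT] at h

lemma decSt_step {st : MSt} {b : Bool} {s s' : List ℕ}
    (h1 : decSt st = some s) (h2 : decSt (stepT T st b) = some s') : s <+: s' := by
  rcases st with ⟨t⟩ | ⟨t, m⟩ | ⟨v⟩
  · obtain rfl : t = s := by simpa [decSt] using h1
    cases b
    · simp [stepT, decSt] at h2
    · obtain rfl : t = s' := by simpa [stepT, decSt] using h2
      exact List.prefix_refl _
  · obtain rfl : t = s := by simpa [decSt] using h1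
    cases b
    · obtain rfl : t = s' := by simpa [stepT, decSt] using h2
      exact List.prefix_refl _
    · simp only [stepT] at h2
      split at h2
      · obtain rfl : t ++ [m] = s' := by simpa [decSt] using h2
        exact List.prefix_append _ _
      · simp [decSt] at h2
  · simp [decSt] at h1

lemma run_chain {l l' : ℕ} (hll : l ≤ l') {s s' : List ℕ}
    (h1 : decSt (runT T (seg β' l)) = some s)
    (h2 : decSt (runT T (seg β' l')) = some s') : s <+: s' := by
  obtain ⟨d, rfl⟩ := Nat.exists_eq_add_of_le hll
  clear hll
  induction d generalizing s' with
  | zero =>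
      rw [Nat.add_zero] at h2
      rw [h1] at h2
      exact (Option.some_inj.mp h2) ▸ List.prefix_refl _
  | succ d ih =>
      rw [Nat.add_succ, st_succ] at h2
      rcases hmid : decSt (runT T (seg β' (l + d))) with _ | t
      · rcases hfz : runT T (seg β' (l + d)) with ⟨t⟩ | ⟨t, m⟩ | ⟨v⟩ <;>
          rw [hfz] at hmid <;> simp [decSt] at hmid
        rw [hfz] at h2
        cases β' (l + d) <;> simp [stepT, decSt] at h2
      · exact (ih hmid).trans (decSt_step hmid h2)

lemma entry_strict {l l' : ℕ} (hll : l < l') {s s' : List ℕ}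
    (h1 : runT T (seg β' l) = .entry s) (h2 : runT T (seg β' l') = .entry s') :
    s.length < s'.length := by
  have hl1 : l + 1 ≤ l' := hll
  have hst1 : runT T (seg β' (l+1)) = stepT T (.entry s) (β' l) := by
    rw [st_succ, h1]
  cases hb : β' l with
  | false =>
      rw [hb] at hst1
      simp only [stepT] at hst1
      have h3 := frozen_absorb (T := T) (β' := β') hst1 (l' - (l+1))
      have hx : l + 1 + (l' - (l+1)) = l' := by omega
      rw [hx] at h3
      rw [h3] at h2; exact absurd h2 (by simp)
  | true =>
      rw [hb] at hst1
      simp only [stepT] at hst1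
      rcases Nat.lt_or_ge (l+1) l' with hlt | hge
      · have hl'e : l' - 1 + 1 = l' := by omega
        have hstep : runT T (seg β' l') = stepT T (runT T (seg β' (l'-1))) (β' (l'-1)) := by
          conv_lhs => rw [← hl'e, st_succ]
        rcases hmid : runT T (seg β' (l'-1)) with ⟨t⟩ | ⟨t, m⟩ | ⟨v⟩ <;> rw [hmid] at hstep
        · rw [h2] at hstep
          cases hb' : β' (l'-1) <;> rw [hb'] at hstep <;> simp [stepT] at hstep
        · have hpre : s <+: t := by
            refine run_chain (T := T) (β' := β') (l := l+1) (l' := l'-1) (by omega) ?_ ?_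
            · rw [hst1]; rfl
            · rw [hmid]; rfl
          rw [h2] at hstep
          cases hb' : β' (l'-1) with
          | false => rw [hb'] at hstep; simp [stepT] at hstep
          | true =>
              rw [hb'] at hstep
              simp only [stepT] at hstep
              split at hstep
              · have hss' : t ++ [m] = s' := by simpa using hstep.symm
                have := hpre.length_le
                rw [← hss']
                simp only [List.length_append, List.length_singleton]
                omega
              · exact absurd hstep.symm (by simp)
        · rw [h2] at hstep
          cases hb' : β' (l'-1) <;> rw [hb'] at hstep <;> simp [stepT] at hstep
      · have : l' = l + 1 := by omega
        subst this
        rw [h2] at hst1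
        exact absurd hst1 (by simp)
end runsec

lemma getD_eq_of_prefix {α : Type*} {a b : List α} (h : a <+: b) {i : ℕ}
    (hi : i < a.length) (d : α) : a.getD i d = b.getD i d := by
  obtain ⟨t, rfl⟩ := h
  rw [List.getD_append _ _ _ _ hi]

lemma osc_mgale_eq_zero (T : List ℕ → Prop) (Ttake : ∀ s n, T s → T (List.take n s))
    (NB : ¬ ∃ x : ℕ → ℕ, ∀ k : ℕ, T (List.ofFn fun i : Fin k => x i)) (β' : ℕ → Bool) :
    osc (mgale T) β' = 0 := by
  have hb : ∀ s, mgale T s ∈ Set.Icc (0:ℝ) 1 := (isMartingale_mgale T).1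
  by_cases hE : ∃ l₀ : ℕ, ∀ l, l₀ ≤ l → ∀ s, runT T (seg β' l) ≠ MSt.entry s
  · obtain ⟨l₀, hl₀⟩ := hE
    refine osc_eq_zero_of_eventually_const hb (N := l₀) (v := mgale T (seg β' l₀)) ?_
    intro l hl
    induction l, hl using Nat.le_induction with
    | base => rfl
    | succ l hl ih =>
        rw [← ih]
        unfold mgale
        rw [st_succ]
        rcases hst : runT T (seg β' l) with ⟨s⟩ | ⟨s, m⟩ | ⟨v⟩
        · exact absurd hst (hl₀ l hl s)
        · cases hb' : β' l
          · simp [stepT, sval]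
          · by_cases hT : T (s ++ [m])
            · exfalso
              refine hl₀ (l+1) (by omega) (s ++ [m]) ?_
              rw [st_succ, hst, hb']
              simp [stepT, hT]
            · simp [stepT, hT, sval]
        · cases β' l <;> simp [stepT, sval]
  · exfalso
    push_neg at hE
    have grow : ∀ n : ℕ, ∃ l s, runT T (seg β' l) = MSt.entry s ∧ n ≤ s.length := by
      intro n
      induction n with
      | zero =>
          obtain ⟨l, _, s, hs⟩ := hE 0
          exact ⟨l, s, hs, Nat.zero_le _⟩
      | succ n ih =>
          obtain ⟨l, s, hs, hn⟩ := ih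
          obtain ⟨l', hll', s', hs'⟩ := hE (l+1)
          refine ⟨l', s', hs', ?_⟩
          have := entry_strict (T := T) (β' := β') (by omega : l < l') hs hs'
          omega
    choose L S hS hlen using grow
    apply NB
    refine ⟨fun i => (S (i+1)).getD i 0, fun k => ?_⟩
    have hofn : (List.ofFn fun i : Fin k => (S (i+1)).getD i 0) = (S k).take k := by
      apply List.ext_getElem
      · simp [hlen k]
      · intro i h1 h2
        simp only [List.getElem_ofFn]
        rw [List.getElem_take]
        have hik : i < k := by simpa using h1
        have hi1 : i < (S (i+1)).length := lt_of_lt_of_le (Nat.lt_succ_self i) (hlen (i+1))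
        have hik' : i < (S k).length := lt_of_lt_of_le hik (hlen k)
        have hcomp : S (i+1) <+: S k ∨ S k <+: S (i+1) := by
          rcases le_total (L (i+1)) (L k) with h | h
          · exact Or.inl (run_chain (T := T) (β' := β') h
              (by rw [hS (i+1)]; rfl) (by rw [hS k]; rfl))
          · exact Or.inr (run_chain (T := T) (β' := β') h
              (by rw [hS k]; rfl) (by rw [hS (i+1)]; rfl))
        have hgd : (S (i+1)).getD i 0 = (S k).getD i 0 := by
          rcases hcomp with h | h
          · exact getD_eq_of_prefix h hi1 0
          · exact (getD_eq_of_prefix h hik' 0).symm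
        rw [hgd, List.getD_eq_getElem _ _ hik']
    rw [hofn]
    exact Ttake _ _ (entry_T (T := T) _ _ (hS k))

/-! ### Divergence along a coded branch -/

def tok (n : ℕ) : List Bool := true :: (List.replicate n false ++ [true])

def codeL (s : List ℕ) : List Bool := s.flatMap tok

lemma codeL_nil : codeL [] = [] := rfl

lemma codeL_append (s : List ℕ) (n : ℕ) : codeL (s ++ [n]) = codeL s ++ tok n := by
  simp [codeL]

lemma tok_length (n : ℕ) : (tok n).length = n + 2 := by simp [tok]

lemma foldl_replicate (T : List ℕ → Prop) (s : List ℕ) :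
    ∀ (j m : ℕ), (List.replicate j false).foldl (stepT T) (MSt.spine s m) = MSt.spine s (m+j) := by
  intro j
  induction j with
  | zero => intro m; simp
  | succ j ih =>
      intro m
      rw [List.replicate_succ, List.foldl_cons]
      have hred : stepT T (MSt.spine s m) false = MSt.spine s (m+1) := rfl
      rw [hred, ih (m+1)]
      congr 1
      omega

lemma run_tok {T : List ℕ → Prop} {σ : List Bool} {s : List ℕ} {n : ℕ}
    (h : runT T σ = MSt.entry s) (hT : T (s ++ [n])) :
    runT T (σ ++ tok n) = MSt.entry (s ++ [n]) := by
  rw [runT_append, h]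
  show (List.replicate n false ++ [true]).foldl (stepT T) (stepT T (MSt.entry s) true) = _
  rw [show stepT T (MSt.entry s) true = MSt.spine s 0 from rfl]
  rw [List.foldl_append, foldl_replicate]
  simp only [List.foldl_cons, List.foldl_nil]
  simp [stepT, hT]

section diverge
variable {T : List ℕ → Prop} {x : ℕ → ℕ}

noncomputable def pre (x : ℕ → ℕ) (k : ℕ) : List ℕ := List.ofFn fun i : Fin k => x i

lemma pre_zero : pre x 0 = [] := rfl

lemma pre_succ (k : ℕ) : pre x (k+1) = pre x k ++ [x k] := by
  rw [pre, List.ofFn_succ', List.concat_eq_append]; rfl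

lemma pre_length (k : ℕ) : (pre x k).length = k := by simp [pre]

lemma run_code (hbr : ∀ k, T (pre x k)) :
    ∀ k, runT T (codeL (pre x k)) = MSt.entry (pre x k) := by
  intro k
  induction k with
  | zero =>
      have h0 : T [] := by have := hbr 0; rwa [pre_zero] at this
      simp [pre_zero, codeL_nil, runT, h0]
  | succ k ih =>
      rw [pre_succ, codeL_append]
      rw [show codeL (pre x k) ++ tok (x k) = codeL (pre x k) ++ tok (x k) from rfl]
      have := run_tok ih (by rw [← pre_succ]; exact hbr (k+1))
      rw [this, ← pre_succ]

noncomputable def codePt (x : ℕ → ℕ) : ℕ → Bool :=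
  fun n => (codeL (pre x (n+1))).getD n false

noncomputable def lenC (x : ℕ → ℕ) (k : ℕ) : ℕ := (codeL (pre x k)).length

lemma lenC_succ (k : ℕ) : lenC x (k+1) = lenC x k + (x k + 2) := by
  rw [lenC, pre_succ, codeL_append]
  simp [tok_length, lenC]

lemma lenC_ge (k : ℕ) : k ≤ lenC x k := by
  induction k with
  | zero => simp
  | succ k ih => rw [lenC_succ]; omega

lemma codeL_prefix {a b : ℕ} (h : a ≤ b) : codeL (pre x a) <+: codeL (pre x b) := by
  induction b with
  | zero =>
      have : a = 0 := by omega
      subst this; exact List.prefix_refl _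
  | succ b ih =>
      rcases Nat.lt_or_ge a (b+1) with h' | h'
      · refine (ih (by omega)).trans ?_
        rw [pre_succ, codeL_append]
        exact List.prefix_append _ _
      · have : a = b+1 := by omega
        subst this; exact List.prefix_refl _

lemma seg_codePt (k : ℕ) : seg (codePt x) (lenC x k) = codeL (pre x k) := by
  apply List.ext_getElem
  · simp [seg_length, lenC]
  · intro i h1 h2
    simp only [seg, List.getElem_ofFn]
    have hik : i < lenC x k := by simpa [seg_length] using h1
    have hi1 : i < lenC x (i+1) := lt_of_lt_of_le (Nat.lt_succ_self i) (lenC_ge (i+1))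
    rcases le_total (i+1) k with h | h
    · calc codePt x i = (codeL (pre x (i+1))).getD i false := rfl
        _ = (codeL (pre x k)).getD i false :=
            getD_eq_of_prefix (codeL_prefix h) hi1 _
        _ = _ := List.getD_eq_getElem _ _ hik
    · calc codePt x i = (codeL (pre x (i+1))).getD i false := rfl
        _ = (codeL (pre x k))[i] := by
            rw [← List.getD_eq_getElem (codeL (pre x k)) false hik]
            exact (getD_eq_of_prefix (codeL_prefix h) hik _).symm

lemma osc_mgale_ne_zero (hbr : ∀ k, T (pre x k)) :
    osc (mgale T) (codePt x) ≠ 0 := by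
  have hb : ∀ s, mgale T s ∈ Set.Icc (0:ℝ) 1 := (isMartingale_mgale T).1
  have hq : (1/4 : ℝ) ≤ osc (mgale T) (codePt x) := by
    apply osc_ge_of_often hb
    intro N
    refine ⟨lenC x N, lenC x (N+1), lenC_ge N, ?_, ?_⟩
    · calc N ≤ N + 1 := by omega
        _ ≤ lenC x (N+1) := lenC_ge (N+1)
    · rw [seg_codePt, seg_codePt]
      unfold mgale
      rw [run_code hbr, run_code hbr]
      simp only [sval, pre_length]
      exact (abs_mval_sub N).ge
  intro h0; rw [h0] at hq; norm_num at hq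

end diverge

/-! ### Locality of the martingale in the tree predicate -/

def lenBound : MSt → ℕ → Prop
  | .entry s, n => s.length ≤ n
  | .spine s _, n => s.length + 1 ≤ n
  | .frozen _, _ => True

lemma runT_lenBound (T : List ℕ → Prop) (σ : List Bool) :
    lenBound (runT T σ) σ.length := by
  induction σ using List.reverseRecOn with
  | nil => by_cases h : T [] <;> simp [runT, h, lenBound]
  | append_singleton σ b ih =>
      rw [runT_concat]
      rcases hst : runT T σ with ⟨s⟩ | ⟨s, m⟩ | ⟨v⟩ <;> rw [hst] at ih
      · cases b
        · simp [stepT, lenBound]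
        · simp only [lenBound] at ih
          simp only [stepT, lenBound, List.length_append]
          simp
          omega
      · cases b
        · simp only [lenBound] at ih
          simp only [stepT, lenBound, List.length_append]
          simp
          omega
        · simp only [lenBound] at ih
          simp only [stepT]
          split
          · simp only [lenBound, List.length_append]
            simp
            omega
          · simp [lenBound]
      · cases b <;> simp [stepT, lenBound]

lemma runT_congr {T T' : List ℕ → Prop} (σ : List Bool)
    (h : ∀ s : List ℕ, s.length ≤ σ.length → (T s ↔ T' s)) : runT T σ = runT T' σ := by
  induction σ using List.reverseRecOn with
  | nil =>
      have h0 : T [] ↔ T' [] := h [] (by simp)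
      by_cases hT : T []
      · simp [runT, hT, h0.mp hT]
      · have hT' : ¬ T' [] := fun hh => hT (h0.mpr hh)
        simp [runT, hT, hT']
  | append_singleton σ b ih =>
      have hσ : ∀ s : List ℕ, s.length ≤ σ.length → (T s ↔ T' s) := by
        intro s hs
        refine h s ?_
        simp only [List.length_append, List.length_singleton]
        omega
      rw [runT_concat, runT_concat, ← ih hσ]
      rcases hst : runT T σ with ⟨s⟩ | ⟨s, m⟩ | ⟨v⟩
      · cases b <;> rfl
      · cases b
        · rfl
        · have hlb := runT_lenBound T σ
          rw [hst] at hlb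
          simp only [lenBound] at hlb
          have hiff : T (s ++ [m]) ↔ T' (s ++ [m]) := by
            refine h _ ?_
            simp only [List.length_append, List.length_singleton]
            omega
          simp only [stepT]
          by_cases hT : T (s ++ [m])
          · rw [if_pos hT, if_pos (hiff.mp hT)]
          · rw [if_neg hT, if_neg (fun hh => hT (hiff.mpr hh))]
      · cases b <;> rfl

/-! ### The tree coded by a point, for a continuous map `u` -/

def TB (u : (ℕ → ℕ) → (ℕ → Bool)) (β : ℕ → Bool) (s : List ℕ) : Prop :=
  ∃ x : ℕ → ℕ, (∀ i, i < s.length → x i = s.getD i 0) ∧ ∀ i, i < s.length → u x i = β i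

lemma TB_take (u : (ℕ → ℕ) → (ℕ → Bool)) (β : ℕ → Bool) :
    ∀ (s : List ℕ) (n : ℕ), TB u β s → TB u β (s.take n) := by
  rintro s n ⟨x, hx, hu⟩
  have hlen : ∀ i, i < (s.take n).length → i < s.length := by
    intro i hi; simp at hi; omega
  refine ⟨x, fun i hi => ?_, fun i hi => hu i (hlen i hi)⟩
  rw [getD_eq_of_prefix (List.take_prefix n s) hi]
  exact hx i (hlen i hi)

lemma TB_local {u : (ℕ → ℕ) → (ℕ → Bool)} {β β' : ℕ → Bool} (s : List ℕ)
    (h : ∀ i, i < s.length → β i = β' i) : TB u β s ↔ TB u β' s := by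
  constructor <;> rintro ⟨x, hx, hu⟩ <;> refine ⟨x, hx, fun i hi => ?_⟩
  · rw [hu i hi, h i hi]
  · rw [hu i hi, h i hi]

lemma TB_branch_of_mem {u : (ℕ → ℕ) → (ℕ → Bool)} {β : ℕ → Bool} {x : ℕ → ℕ}
    (hux : u x = β) (k : ℕ) : TB u β (pre x k) := by
  refine ⟨x, fun i hi => ?_, fun i _ => by rw [hux]⟩
  rw [pre_length] at hi
  rw [List.getD_eq_getElem _ _ (by rw [pre_length]; exact hi)]
  simp [pre]

lemma mem_range_of_TB_branch {u : (ℕ → ℕ) → (ℕ → Bool)} (hu : Continuous u)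
    {β : ℕ → Bool} {x : ℕ → ℕ} (h : ∀ k, TB u β (pre x k)) : u x = β := by
  have hw : ∀ k : ℕ, ∃ y : ℕ → ℕ, (∀ i, i < k → y i = x i) ∧ ∀ i, i < k → u y i = β i := by
    intro k
    obtain ⟨y, h1, h2⟩ := h k
    rw [pre_length] at h1 h2
    refine ⟨y, fun i hi => ?_, h2⟩
    rw [h1 i hi, List.getD_eq_getElem _ _ (by rw [pre_length]; exact hi)]
    simp [pre]
  choose y hy1 hy2 using hw
  have hyx : Tendsto y atTop (𝓝 x) := by
    rw [tendsto_pi_nhds]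
    intro i
    have he : ∀ᶠ k in atTop, x i = y k i :=
      eventually_atTop.mpr ⟨i+1, fun k hk => (hy1 k i (by omega)).symm⟩
    exact Tendsto.congr' he tendsto_const_nhds
  have h1 : Tendsto (fun k => u (y k)) atTop (𝓝 (u x)) := (hu.tendsto x).comp hyx
  have h2 : Tendsto (fun k => u (y k)) atTop (𝓝 β) := by
    rw [tendsto_pi_nhds]
    intro i
    have he : ∀ᶠ k in atTop, β i = u (y k) i :=
      eventually_atTop.mpr ⟨i+1, fun k hk => (hy2 k i (by omega)).symm⟩
    exact Tendsto.congr' he tendsto_const_nhds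
  exact tendsto_nhds_unique h1 h2

/-! ### Continuity of the reduction -/

lemma continuous_mgale_TB (u : (ℕ → ℕ) → (ℕ → Bool)) :
    Continuous fun β : ℕ → Bool => (fun σ => mgale (TB u β) σ : List Bool → ℝ) := by
  apply continuous_pi
  intro σ
  rw [continuous_iff_continuousAt]
  intro β₀
  have hUopen : IsOpen {β : ℕ → Bool | ∀ i, i < σ.length → β i = β₀ i} := by
    have he : {β : ℕ → Bool | ∀ i, i < σ.length → β i = β₀ i} =
        ⋂ i ∈ Finset.range σ.length, (fun β : ℕ → Bool => β i) ⁻¹' ({β₀ i} : Set Bool) := by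
      ext β; simp
    rw [he]
    exact isOpen_biInter_finset fun i _ =>
      (continuous_apply i : Continuous fun β : ℕ → Bool => β i).isOpen_preimage ({β₀ i} : Set Bool) (isOpen_discrete _)
  have hUnhds : {β : ℕ → Bool | ∀ i, i < σ.length → β i = β₀ i} ∈ 𝓝 β₀ :=
    hUopen.mem_nhds (by simp)
  refine Filter.EventuallyEq.continuousAt (y := mgale (TB u β₀) σ) ?_
  filter_upwards [hUnhds] with β hβ
  unfold mgale
  rw [runT_congr σ (fun s hs => TB_local s (fun i hi => hβ i (lt_of_lt_of_le hi hs)))]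

/-! ### The hardness reduction -/

lemma hard_reduction (A : Set (ℕ → Bool)) (hA : IsCoanalytic A) :
    ∃ h : (ℕ → Bool) → Mart, Continuous h ∧ ∀ β, (β ∈ A ↔ h β ∈ Pconv) := by
  unfold IsCoanalytic at hA
  rw [MeasureTheory.AnalyticSet_def] at hA
  rcases hA with hempty | ⟨u, hu, hrange⟩
  · refine ⟨fun _ => ⟨mgale (fun _ => False), isMartingale_mgale _⟩, continuous_const, ?_⟩
    intro β
    have hβ : β ∈ A := by
      have : Aᶜ ⊆ ∅ := hempty.le
      by_contra hc
      exact this hc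
    simp only [hβ, true_iff]
    intro β'
    refine osc_mgale_eq_zero _ (fun s n h => h.elim) ?_ β'
    rintro ⟨x, hx⟩
    exact hx 0
  · refine ⟨fun β => ⟨mgale (TB u β), isMartingale_mgale _⟩, ?_, ?_⟩
    · exact Continuous.subtype_mk (continuous_mgale_TB u) _
    · intro β
      constructor
      · intro hβ β'
        refine osc_mgale_eq_zero _ (TB_take u β) ?_ β'
        rintro ⟨x, hx⟩
        have hux : u x = β := mem_range_of_TB_branch hu (fun k => hx k)
        have : β ∈ Aᶜ := by rw [← hrange]; exact ⟨x, hux⟩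
        exact this hβ
      · intro hP
        by_contra hβ
        have hmem : β ∈ Aᶜ := hβ
        rw [← hrange] at hmem
        obtain ⟨x, hux⟩ := hmem
        exact osc_mgale_ne_zero (fun k => TB_branch_of_mem hux k) (hP (codePt x))



/-! ### Part 1 : coanalyticity of `Pone` -/

instance : PolishSpace Mart := by
  have h1 : IsClosed {f : List Bool → ℝ | ∀ s, f s ∈ Set.Icc (0:ℝ) 1} := by
    have he : {f : List Bool → ℝ | ∀ s, f s ∈ Set.Icc (0:ℝ) 1} =
        ⋂ s, (fun f : List Bool → ℝ => f s) ⁻¹' (Set.Icc 0 1) := by ext; simp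
    rw [he]
    exact isClosed_iInter fun s => isClosed_Icc.preimage (continuous_apply s)
  have h2 : IsClosed {f : List Bool → ℝ |
      ∀ s, f s = (f (s ++ [false]) + f (s ++ [true])) / 2} := by
    have he : {f : List Bool → ℝ | ∀ s, f s = (f (s ++ [false]) + f (s ++ [true])) / 2} =
        ⋂ s, {f : List Bool → ℝ | f s = (f (s ++ [false]) + f (s ++ [true])) / 2} := by
      ext; simp
    rw [he]
    refine isClosed_iInter fun s => isClosed_eq (continuous_apply s) ?_
    exact ((continuous_apply (s ++ [false])).add (continuous_apply (s ++ [true]))).div_const 2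
  have he : {f : List Bool → ℝ | IsMartingale f} =
      {f : List Bool → ℝ | ∀ s, f s ∈ Set.Icc (0:ℝ) 1} ∩
        {f : List Bool → ℝ | ∀ s, f s = (f (s ++ [false]) + f (s ++ [true])) / 2} := rfl
  exact (he ▸ h1.inter h2).polishSpace

noncomputable def cFn (k l : ℕ) (z : (ℕ → Mart) × (ℕ → Bool)) : ℝ := (z.1 k).1 (seg z.2 l)

lemma continuous_cFn (k l : ℕ) : Continuous (cFn k l) := by
  rw [continuous_iff_continuousAt]
  intro z₀
  have hUopen : IsOpen {z : (ℕ → Mart) × (ℕ → Bool) | ∀ i, i < l → z.2 i = z₀.2 i} := by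
    have he : {z : (ℕ → Mart) × (ℕ → Bool) | ∀ i, i < l → z.2 i = z₀.2 i} =
        ⋂ i ∈ Finset.range l,
          (fun z : (ℕ → Mart) × (ℕ → Bool) => z.2 i) ⁻¹' ({z₀.2 i} : Set Bool) := by
      ext z; simp
    rw [he]
    exact isOpen_biInter_finset fun i _ =>
      ((continuous_apply i).comp continuous_snd).isOpen_preimage _ (isOpen_discrete _)
  have hcont : ContinuousAt (fun z : (ℕ → Mart) × (ℕ → Bool) => (z.1 k).1 (seg z₀.2 l)) z₀ := by
    apply Continuous.continuousAt
    exact (continuous_apply (seg z₀.2 l)).comp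
      (continuous_subtype_val.comp ((continuous_apply k).comp continuous_fst))
  refine hcont.congr ?_
  filter_upwards [hUopen.mem_nhds (by simp)] with z hz
  have hseg : seg z.2 l = seg z₀.2 l := by
    unfold seg
    congr 1
    funext i
    exact hz i i.isLt
  simp only [cFn, hseg]

def CauL (k : ℕ) : Set ((ℕ → Mart) × (ℕ → Bool)) :=
  ⋂ ε : {q : ℚ // 0 < q}, ⋃ N : ℕ, ⋂ p : {n : ℕ // N ≤ n}, ⋂ q : {n : ℕ // N ≤ n},
    {z | |cFn k p.1 z - cFn k q.1 z| ≤ (ε.1 : ℝ)}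

def SepC (k k' : ℕ) (ε : ℚ) : Set ((ℕ → Mart) × (ℕ → Bool)) :=
  ⋃ M : ℕ, ⋂ p : {n : ℕ // M ≤ n}, ⋂ q : {n : ℕ // M ≤ n},
    {z | (ε : ℝ) ≤ |cFn k p.1 z - cFn k' q.1 z|}

def NotConv : Set ((ℕ → Mart) × (ℕ → Bool)) :=
  ⋃ ε : {q : ℚ // 0 < q}, ⋂ N : ℕ, ⋃ k : {n : ℕ // N ≤ n}, ⋃ k' : {n : ℕ // N ≤ n},
    SepC k.1 k'.1 ε.1

def DSet : Set ((ℕ → Mart) × (ℕ → Bool)) :=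
  (⋃ k : ℕ, (CauL k)ᶜ) ∪ ((⋂ k : ℕ, CauL k) ∩ NotConv)

section meas
variable [MeasurableSpace ((ℕ → Mart) × (ℕ → Bool))]
  [BorelSpace ((ℕ → Mart) × (ℕ → Bool))]

lemma measurable_CauL (k : ℕ) : MeasurableSet (CauL k) := by
  refine MeasurableSet.iInter fun ε => MeasurableSet.iUnion fun N =>
    MeasurableSet.iInter fun p => MeasurableSet.iInter fun q => ?_
  exact (isClosed_le (((continuous_cFn k p.1).sub (continuous_cFn k q.1)).abs)
    continuous_const).measurableSet

lemma measurable_SepC (k k' : ℕ) (ε : ℚ) : MeasurableSet (SepC k k' ε) := by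
  refine MeasurableSet.iUnion fun M =>
    MeasurableSet.iInter fun p => MeasurableSet.iInter fun q => ?_
  exact (isClosed_le continuous_const
    (((continuous_cFn k p.1).sub (continuous_cFn k' q.1)).abs)).measurableSet

lemma measurable_NotConv : MeasurableSet NotConv := by
  refine MeasurableSet.iUnion fun ε => MeasurableSet.iInter fun N =>
    MeasurableSet.iUnion fun k => MeasurableSet.iUnion fun k' => ?_
  exact measurable_SepC k.1 k'.1 ε.1

lemma measurable_DSet : MeasurableSet DSet := by
  refine MeasurableSet.union (MeasurableSet.iUnion fun k => (measurable_CauL k).compl) ?_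
  exact (MeasurableSet.iInter fun k => measurable_CauL k).inter measurable_NotConv

end meas

lemma mem_CauL_iff {z : (ℕ → Mart) × (ℕ → Bool)} (k : ℕ) :
    z ∈ CauL k ↔ osc (z.1 k).1 z.2 = 0 := by
  have hb := (z.1 k).2.1
  simp only [CauL, Set.mem_iInter, Set.mem_iUnion, Set.mem_setOf_eq, Subtype.forall]
  constructor
  · intro h
    rw [osc_eq_zero_iff hb]
    intro ε hε
    obtain ⟨r, hr0, hrε⟩ := exists_rat_btwn hε
    obtain ⟨N, hN⟩ := h r (by exact_mod_cast hr0)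
    exact ⟨N, fun p q hp hq => (hN p hp q hq).trans hrε.le⟩
  · intro h ε hε
    obtain ⟨N, hN⟩ := (osc_eq_zero_iff hb).mp h ε (by exact_mod_cast hε)
    exact ⟨N, fun p hp q hq => hN p q hp hq⟩

lemma tendsto_psi {f : List Bool → ℝ} {β : ℕ → Bool} (hb : ∀ s, f s ∈ Set.Icc (0:ℝ) 1)
    (h : osc f β = 0) : Tendsto (fun l => f (seg β l)) atTop (𝓝 (psi f β)) := by
  have hc : CauchySeq (fun l => f (seg β l)) := by
    rw [Metric.cauchySeq_iff]
    intro ε hε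
    obtain ⟨N, hN⟩ := (osc_eq_zero_iff hb).mp h (ε/2) (by linarith)
    refine ⟨N, fun m hm n hn => ?_⟩
    have := hN m n hm hn
    rw [Real.dist_eq]
    linarith
  obtain ⟨L, hL⟩ := cauchySeq_tendsto_of_complete hc
  unfold psi
  rw [hL.limUnder_eq]
  exact hL

lemma mem_NotConv_iff {z : (ℕ → Mart) × (ℕ → Bool)}
    (H : ∀ k, osc (z.1 k).1 z.2 = 0) :
    z ∈ NotConv ↔ ¬ ∃ L, Tendsto (fun k => psi (z.1 k).1 z.2) atTop (𝓝 L) := by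
  have hT : ∀ k, Tendsto (fun l => cFn k l z) atTop (𝓝 (psi (z.1 k).1 z.2)) :=
    fun k => tendsto_psi ((z.1 k).2.1) (H k)
  set a := fun k => psi (z.1 k).1 z.2 with ha
  simp only [NotConv, SepC, Set.mem_iUnion, Set.mem_iInter, Set.mem_setOf_eq,
    Subtype.exists, Subtype.forall]
  constructor
  · rintro ⟨ε, hε, hsep⟩ ⟨L, hL⟩
    have hC := hL.cauchySeq
    rw [Metric.cauchySeq_iff] at hC
    obtain ⟨N, hN⟩ := hC (ε : ℝ) (by exact_mod_cast hε)
    obtain ⟨k, hk, k', hk', M, hM⟩ := hsep N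
    have hlim : Tendsto (fun t => |cFn k t z - cFn k' t z|) atTop (𝓝 |a k - a k'|) :=
      ((hT k).sub (hT k')).abs
    have hge : (ε:ℝ) ≤ |a k - a k'| := by
      refine ge_of_tendsto hlim ?_
      refine eventually_atTop.mpr ⟨M, fun t ht => hM t ht t ht⟩
    have hlt := hN k hk k' hk'
    rw [Real.dist_eq] at hlt
    linarith
  · intro hnc
    have hnC : ¬ CauchySeq a := fun hC => hnc (cauchySeq_tendsto_of_complete hC)
    rw [Metric.cauchySeq_iff] at hnC
    push_neg at hnC
    obtain ⟨ε, hε, hsep⟩ := hnC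
    obtain ⟨r, hr0, hrh⟩ := exists_rat_btwn (by linarith : (0:ℝ) < ε/2)
    refine ⟨r, by exact_mod_cast hr0, ?_⟩
    intro N
    obtain ⟨k, hk, k', hk', hdist⟩ := hsep N
    have hd : ε ≤ |a k - a k'| := by
      rw [← Real.dist_eq]
      exact not_lt.mp (by simpa using hdist)
    obtain ⟨M1, hM1⟩ := Metric.tendsto_atTop.mp (hT k) (ε/4) (by linarith)
    obtain ⟨M2, hM2⟩ := Metric.tendsto_atTop.mp (hT k') (ε/4) (by linarith)
    refine ⟨k, hk, k', hk', max M1 M2, ?_⟩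
    intro p hp q hq
    have e1 := hM1 p (le_trans (le_max_left _ _) hp)
    have e2 := hM2 q (le_trans (le_max_right _ _) hq)
    rw [Real.dist_eq] at e1 e2
    have t1 : |a k - a k'| ≤ |a k - cFn k p z| + |cFn k p z - a k'| := abs_sub_le _ _ _
    have t2 : |cFn k p z - a k'| ≤ |cFn k p z - cFn k' q z| + |cFn k' q z - a k'| :=
      abs_sub_le _ _ _
    have e1' : |a k - cFn k p z| < ε/4 := by rw [abs_sub_comm]; exact e1
    have hεr : (r : ℝ) ≤ ε/2 := hrh.le
    have : ε/2 ≤ |cFn k p z - cFn k' q z| := by linarith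
    linarith

set_option maxHeartbeats 1000000 in
lemma proj_DSet : Prod.fst '' DSet = Poneᶜ := by
  ext F
  simp only [Set.mem_image, Set.mem_compl_iff]
  constructor
  · rintro ⟨z, hz, rfl⟩
    rcases hz with hz | hz
    · obtain ⟨k, hk⟩ := Set.mem_iUnion.mp hz
      intro hPone
      exact hk ((mem_CauL_iff k).mpr (hPone.1 k z.2))
    · obtain ⟨hcau, hnc⟩ := hz
      have H : ∀ k, osc (z.1 k).1 z.2 = 0 := fun k =>
        (mem_CauL_iff k).mp (Set.mem_iInter.mp hcau k)
      intro hPone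
      exact (mem_NotConv_iff H).mp hnc (hPone.2 z.2)
  · intro hF
    by_cases hP : ∀ (k : ℕ) (β : ℕ → Bool), osc ((F k).1) β = 0
    · have hQ : ¬ ∀ β : ℕ → Bool, ∃ L, Tendsto (fun k => psi (F k).1 β) atTop (𝓝 L) := by
        intro hq
        exact hF ⟨fun k β => hP k β, hq⟩
      push_neg at hQ
      obtain ⟨β, hβ⟩ := hQ
      have hm1 : (F, β) ∈ ⋂ k : ℕ, CauL k :=
        Set.mem_iInter.mpr fun k => (mem_CauL_iff (z := (F, β)) k).mpr (hP k β)
      have hm2 : (F, β) ∈ NotConv :=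
        (mem_NotConv_iff (z := (F, β)) (fun k => hP k β)).mpr (by push_neg; exact hβ)
      exact ⟨(F, β), Or.inr ⟨hm1, hm2⟩, rfl⟩
    · push_neg at hP
      obtain ⟨k, β, hk⟩ := hP
      exact ⟨(F, β), Or.inl (Set.mem_iUnion.mpr
        ⟨k, fun hc => hk ((mem_CauL_iff (z := (F, β)) k).mp hc)⟩), rfl⟩

lemma pone_coanalytic : IsCoanalytic Pone := by
  unfold IsCoanalytic
  letI : MeasurableSpace ((ℕ → Mart) × (ℕ → Bool)) := borel _
  haveI : BorelSpace ((ℕ → Mart) × (ℕ → Bool)) := ⟨rfl⟩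
  haveI : PolishSpace (ℕ → Bool) := by
    letI : (i : ℕ) → PolishSpace ((fun _ : ℕ => Bool) i) := fun _ => inferInstanceAs (PolishSpace Bool)
    exact inferInstanceAs (PolishSpace ((i : ℕ) → (fun _ : ℕ => Bool) i))
  rw [← proj_DSet]
  exact measurable_DSet.analyticSet.image_of_continuous continuous_fst

lemma pconv_iff_osc {β : ℕ → Bool} {h : Mart} : h ∈ Pconv ↔ ∀ β' : ℕ → Bool, osc h.1 β' = 0 :=
  Iff.rfl

/-- `𝓟₁` is `Π¹₁`-complete. -/
theorem Pone_coanalytic_complete :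
    IsCoanalytic Pone ∧
    ∀ A : Set (ℕ → Bool), IsCoanalytic A →
      ∃ g : (ℕ → Bool) → (ℕ → Mart), Continuous g ∧ A = g ⁻¹' Pone := by
  constructor
  · exact pone_coanalytic
  · intro A hA
    obtain ⟨h, hcont, hiff⟩ := hard_reduction A hA
    refine ⟨fun β _ => h β, continuous_pi fun _ => hcont, ?_⟩
    ext β
    simp only [Set.mem_preimage]
    constructor
    · intro hβ
      exact ⟨fun _ => (hiff β).mp hβ, fun β' => ⟨psi (h β).1 β', tendsto_const_nhds⟩⟩
    · intro hβ
      exact (hiff β).mpr (hβ.1 0)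
end

section
/- The set 𝓟₂ of sequences of everywhere converging martingales whose associated functions converge pointwise to zero, 𝓟₂ := {(f_k)_{k∈ℕ} ∈ 𝓟^ℕ : for every β ∈ 2^ω, lim_{k→∞} ψ(f_k)(β) = 0}, is Π¹₁-complete: 𝓟₂ is a coanalytic subset of the Polish space ([0,1]^{2^{<ω}})^ℕ, and for every coanalytic subset A of 2^ω there is a continuous map g : 2^ω → 𝓜^ℕ with A = g⁻¹(𝓟₂). -/
open MeasureTheory Filter Topology
open scoped ENNReal

/-- `𝓟₂`: sequences of everywhere converging martingales whose associated
functions converge pointwise to zero. -/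
def Ptwo : Set (ℕ → Mart) :=
  {F | (∀ k, F k ∈ Pconv) ∧
    ∀ β : ℕ → Bool, Tendsto (fun k => psi (F k).1 β) atTop (𝓝 (0:ℝ))}


open MeasureTheory Filter Topology Set
namespace PtwoProof

lemma seg_length (β : ℕ → Bool) (l : ℕ) : (seg β l).length = l := by simp [seg]

lemma seg_getElem (β : ℕ → Bool) (l i : ℕ) (h : i < (seg β l).length) :
    (seg β l)[i] = β i := by simp [seg]

lemma take_seg (β : ℕ → Bool) {m l : ℕ} (h : m ≤ l) : (seg β l).take m = seg β m := by
  apply List.ext_getElem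
  · simp [seg_length, h]
  · intro i h1 h2
    rw [List.getElem_take, seg_getElem, seg_getElem]

lemma seg_prefix (β : ℕ → Bool) {m l : ℕ} (h : m ≤ l) : seg β m <+: seg β l := by
  rw [← take_seg β h]; exact List.take_prefix _ _

section osc
variable {f : List Bool → ℝ} {β : ℕ → Bool}

lemma abs_sub_le_one (hb : ∀ s, f s ∈ Set.Icc (0:ℝ) 1) (u v : List Bool) : |f u - f v| ≤ 1 := by
  rw [abs_sub_le_iff]
  constructor <;> nlinarith [(hb u).1, (hb u).2, (hb v).1, (hb v).2]

/-- inner sup bounded -/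
private lemma inner_bdd (hb : ∀ s, f s ∈ Set.Icc (0:ℝ) 1) (N : ℕ) (p : {n : ℕ // N ≤ n}) :
    BddAbove (Set.range fun q : {n : ℕ // N ≤ n} => |f (seg β p.1) - f (seg β q.1)|) := by
  refine ⟨1, ?_⟩; rintro x ⟨q, rfl⟩; exact abs_sub_le_one hb _ _

private lemma outer_bdd (hb : ∀ s, f s ∈ Set.Icc (0:ℝ) 1) (N : ℕ) :
    BddAbove (Set.range fun p : {n : ℕ // N ≤ n} =>
      ⨆ q : {n : ℕ // N ≤ n}, |f (seg β p.1) - f (seg β q.1)|) := by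
  refine ⟨1, ?_⟩; rintro x ⟨p, rfl⟩
  exact ciSup_le fun q => abs_sub_le_one hb _ _

instance (N : ℕ) : Nonempty {n : ℕ // N ≤ n} := ⟨⟨N, le_rfl⟩⟩

lemma S_le_iff (hb : ∀ s, f s ∈ Set.Icc (0:ℝ) 1) (N : ℕ) {c : ℝ} :
    (⨆ p : {n : ℕ // N ≤ n}, ⨆ q : {n : ℕ // N ≤ n}, |f (seg β p.1) - f (seg β q.1)|) ≤ c ↔
      ∀ p, N ≤ p → ∀ q, N ≤ q → |f (seg β p) - f (seg β q)| ≤ c := by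
  rw [ciSup_le_iff (outer_bdd hb N)]
  constructor
  · intro h p hp q hq
    exact le_trans (le_ciSup (inner_bdd hb N ⟨p, hp⟩) ⟨q, hq⟩) (h ⟨p, hp⟩)
  · intro h p
    exact ciSup_le fun q => h p.1 p.2 q.1 q.2

lemma S_nonneg (hb : ∀ s, f s ∈ Set.Icc (0:ℝ) 1) (N : ℕ) :
    0 ≤ ⨆ p : {n : ℕ // N ≤ n}, ⨆ q : {n : ℕ // N ≤ n}, |f (seg β p.1) - f (seg β q.1)| := by
  have h0 : (0:ℝ) ≤ ⨆ q : {n : ℕ // N ≤ n}, |f (seg β N) - f (seg β q.1)| :=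
    le_trans (by simp) (le_ciSup (inner_bdd hb N ⟨N, le_rfl⟩) ⟨N, le_rfl⟩)
  exact le_trans h0 (le_ciSup (outer_bdd hb N) ⟨N, le_rfl⟩)

lemma osc_nonneg (hb : ∀ s, f s ∈ Set.Icc (0:ℝ) 1) : 0 ≤ osc f β :=
  le_ciInf (S_nonneg hb)

lemma osc_le_S (hb : ∀ s, f s ∈ Set.Icc (0:ℝ) 1) (N : ℕ) :
    osc f β ≤ ⨆ p : {n : ℕ // N ≤ n}, ⨆ q : {n : ℕ // N ≤ n}, |f (seg β p.1) - f (seg β q.1)| :=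
  ciInf_le ⟨0, by rintro x ⟨M, rfl⟩; exact S_nonneg hb M⟩ N

lemma osc_eq_zero_iff (hb : ∀ s, f s ∈ Set.Icc (0:ℝ) 1) :
    osc f β = 0 ↔ ∀ m : ℕ, ∃ N : ℕ, ∀ p, N ≤ p → ∀ q, N ≤ q →
      |f (seg β p) - f (seg β q)| ≤ 1/(m+1) := by
  constructor
  · intro h m
    have h1 : osc f β < 1/(m+1) := by
      rw [h]; positivity
    obtain ⟨N, hN⟩ := exists_lt_of_ciInf_lt h1
    exact ⟨N, (S_le_iff hb N).1 hN.le⟩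
  · intro h
    refine le_antisymm ?_ (osc_nonneg hb)
    refine le_of_forall_gt fun c hc => ?_
    obtain ⟨m, hm⟩ := exists_nat_one_div_lt hc
    obtain ⟨N, hN⟩ := h m
    calc osc f β ≤ _ := osc_le_S hb N
    _ ≤ 1/(m+1) := (S_le_iff hb N).2 hN
    _ < c := hm

lemma osc_eq_zero_of_eventually (hb : ∀ s, f s ∈ Set.Icc (0:ℝ) 1) {N : ℕ} {c : ℝ}
    (h : ∀ l, N ≤ l → f (seg β l) = c) : osc f β = 0 := by
  refine le_antisymm (le_trans (osc_le_S hb N) ?_) (osc_nonneg hb)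
  refine (S_le_iff hb N).2 fun p hp q hq => ?_
  rw [h p hp, h q hq, sub_self, abs_zero]

lemma tendsto_of_eventually {N : ℕ} {c : ℝ} (h : ∀ l, N ≤ l → f (seg β l) = c) :
    Tendsto (fun l => f (seg β l)) atTop (𝓝 c) := by
  refine tendsto_const_nhds.congr' ?_
  filter_upwards [eventually_ge_atTop N] with l hl using (h l hl).symm

lemma psi_eq_of_eventually {N : ℕ} {c : ℝ} (h : ∀ l, N ≤ l → f (seg β l) = c) :
    psi f β = c :=
  (tendsto_of_eventually h).limUnder_eq

lemma tendsto_psi_of_osc_eq_zero (hb : ∀ s, f s ∈ Set.Icc (0:ℝ) 1) (h : osc f β = 0) :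
    Tendsto (fun l => f (seg β l)) atTop (𝓝 (psi f β)) := by
  have hc : CauchySeq (fun l => f (seg β l)) := by
    rw [Metric.cauchySeq_iff]
    intro ε hε
    obtain ⟨m, hm⟩ := exists_nat_one_div_lt hε
    obtain ⟨N, hN⟩ := (osc_eq_zero_iff hb).1 h m
    exact ⟨N, fun p hp q hq => lt_of_le_of_lt (hN p hp q hq) hm⟩
  obtain ⟨c, hc⟩ := cauchySeq_tendsto_of_complete hc
  rwa [psi, hc.limUnder_eq]

end osc
end PtwoProof
namespace PtwoProof
/-- Completed block lengths (runs of `true` terminated by `false`). -/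
def bl : List Bool → List ℕ
  | [] => []
  | false :: u => 0 :: bl u
  | true :: u => match bl u with
    | [] => []
    | a :: t => (a+1) :: t

/-- Encode a finite sequence of naturals as blocks of `true`s separated by `false`s. -/
def enc : List ℕ → List Bool
  | [] => []
  | a :: s => List.replicate a true ++ false :: enc s

@[simp] lemma bl_nil : bl [] = [] := rfl
@[simp] lemma bl_false (u : List Bool) : bl (false :: u) = 0 :: bl u := rfl
lemma bl_true_of_nil {u : List Bool} (h : bl u = []) : bl (true :: u) = [] := by
  show (match bl u with | [] => [] | a :: t => (a+1) :: t) = []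
  rw [h]
lemma bl_true_of_cons {u : List Bool} {a : ℕ} {t : List ℕ} (h : bl u = a :: t) :
    bl (true :: u) = (a+1) :: t := by
  show (match bl u with | [] => [] | a :: t => (a+1) :: t) = _
  rw [h]

lemma bl_replicate (t : ℕ) (u : List Bool) :
    bl (List.replicate t true ++ false :: u) = t :: bl u := by
  induction t with
  | zero => simp
  | succ t ih =>
    rw [List.replicate_succ, List.cons_append, bl_true_of_cons ih]

lemma bl_enc_append (s : List ℕ) (v : List Bool) : bl (enc s ++ v) = s ++ bl v := by
  induction s with
  | nil => simp [enc]
  | cons a s ih =>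
    rw [enc, List.append_assoc, List.cons_append, bl_replicate, ih, List.cons_append]

lemma bl_enc (s : List ℕ) : bl (enc s) = s := by
  have := bl_enc_append s []
  simpa using this

lemma enc_append (s t : List ℕ) : enc (s ++ t) = enc s ++ enc t := by
  induction s with
  | nil => simp [enc]
  | cons a s ih => simp [enc, ih]

lemma enc_length (s : List ℕ) : (enc s).length = s.sum + s.length := by
  induction s with
  | nil => simp [enc]
  | cons a s ih => simp [enc, ih]; omega

lemma bl_append_prefix (u v : List Bool) : ∃ r, bl (u ++ v) = bl u ++ r := by
  induction u with
  | nil => exact ⟨bl v, rfl⟩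
  | cons b u ih =>
    obtain ⟨r, hr⟩ := ih
    cases b
    · exact ⟨r, by simp [hr]⟩
    · rcases h : bl u with _ | ⟨a, t⟩
      · exact ⟨bl (true :: (u ++ v)), by rw [bl_true_of_nil h]; simp⟩
      · rw [h] at hr
        rw [List.cons_append, bl_true_of_cons hr, bl_true_of_cons h]
        exact ⟨r, rfl⟩

lemma bl_concat_false_length (u : List Bool) :
    (bl (u ++ [false])).length = (bl u).length + 1 := by
  induction u with
  | nil => simp
  | cons b u ih =>
    cases b
    · simp only [List.cons_append, bl_false, List.length_cons, ih]
    · rcases h' : bl (u ++ [false]) with _ | ⟨a, t⟩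
      · rw [h'] at ih; simp at ih
      · rcases h : bl u with _ | ⟨b', t'⟩
        · rw [List.cons_append, bl_true_of_cons h', bl_true_of_nil h]
          rw [h', h] at ih
          simp_all
        · rw [List.cons_append, bl_true_of_cons h', bl_true_of_cons h]
          rw [h', h] at ih
          simp at ih ⊢
          omega

end PtwoProof
namespace PtwoProof
open Filter Topology
open scoped Classical

/-- The martingale associated to a predicate `D` on binary strings which only
depends on the first `k+1` bits. -/
noncomputable def mart (D : List Bool → Prop) (k : ℕ) : List Bool → ℝ :=
  fun s => (∑ t : Fin (k + 1 - s.length) → Bool,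
    if D (s ++ List.ofFn t) then (1:ℝ) else 0) / 2 ^ (k + 1 - s.length)

lemma mart_mem_Icc (D : List Bool → Prop) (k : ℕ) (s : List Bool) :
    mart D k s ∈ Set.Icc (0:ℝ) 1 := by
  unfold mart
  constructor
  · apply div_nonneg
    · apply Finset.sum_nonneg
      intro t _
      split <;> norm_num
    · positivity
  · rw [div_le_one (by positivity)]
    calc (∑ t : Fin (k + 1 - s.length) → Bool, if D (s ++ List.ofFn t) then (1:ℝ) else 0)
        ≤ ∑ _t : Fin (k + 1 - s.length) → Bool, (1:ℝ) := by
          apply Finset.sum_le_sum; intro t _; split <;> norm_num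
      _ = 2 ^ (k + 1 - s.length) := by
          simp [Finset.card_univ]

lemma mart_eq_indicator (D : List Bool → Prop) (k : ℕ) {s : List Bool}
    (h : k + 1 ≤ s.length) : mart D k s = if D s then 1 else 0 := by
  unfold mart
  have h0 : k + 1 - s.length = 0 := by omega
  rw [h0]
  rw [Fintype.sum_unique (fun t : Fin 0 → Bool => if D (s ++ List.ofFn t) then (1:ℝ) else 0)]
  simp

lemma ofFn_cons {d : ℕ} (b : Bool) (t : Fin d → Bool) :
    List.ofFn (Fin.cons b t : Fin (d+1) → Bool) = b :: List.ofFn t := by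
  rw [List.ofFn_succ]
  simp

lemma sum_split (D : List Bool → Prop) (s : List Bool) (d : ℕ) :
    (∑ t : Fin (d+1) → Bool, if D (s ++ List.ofFn t) then (1:ℝ) else 0)
      = (∑ t : Fin d → Bool, if D ((s ++ [false]) ++ List.ofFn t) then (1:ℝ) else 0)
      + (∑ t : Fin d → Bool, if D ((s ++ [true]) ++ List.ofFn t) then (1:ℝ) else 0) := by
  let e : (Bool × (Fin d → Bool)) ≃ (Fin (d+1) → Bool) :=
    ⟨fun p => Fin.cons p.1 p.2, fun t => (t 0, fun i => t i.succ),
     fun p => by simp, fun t => by funext i; cases i using Fin.cases <;> simp⟩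
  rw [← Equiv.sum_comp e (fun t => if D (s ++ List.ofFn t) then (1:ℝ) else 0)]
  rw [Fintype.sum_prod_type]
  rw [Fintype.sum_bool]
  have key : ∀ (b : Bool) (t : Fin d → Bool),
      s ++ List.ofFn (e (b, t)) = (s ++ [b]) ++ List.ofFn t := by
    intro b t
    have he : e (b, t) = Fin.cons b t := rfl
    rw [he, ofFn_cons]
    simp
  rw [add_comm]
  congr 1 <;> · apply Finset.sum_congr rfl; intro t _; rw [key]

lemma mart_isMartingale (D : List Bool → Prop) (k : ℕ)
    (hD : ∀ u v, u.take (k+1) = v.take (k+1) → (D u ↔ D v)) :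
    IsMartingale (mart D k) := by
  refine ⟨mart_mem_Icc D k, fun s => ?_⟩
  by_cases h : k + 1 ≤ s.length
  · have hf : k + 1 ≤ (s ++ [false]).length := by simp; omega
    have ht : k + 1 ≤ (s ++ [true]).length := by simp; omega
    rw [mart_eq_indicator D k h, mart_eq_indicator D k hf, mart_eq_indicator D k ht]
    have e1 : D (s ++ [false]) ↔ D s := hD _ _ (List.take_append_of_le_length h)
    have e2 : D (s ++ [true]) ↔ D s := hD _ _ (List.take_append_of_le_length h)
    rw [if_congr e1 rfl rfl, if_congr e2 rfl rfl]
    ring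
  · obtain ⟨d, hd⟩ : ∃ d, k + 1 - s.length = d + 1 := ⟨k - s.length, by omega⟩
    have hdf : k + 1 - (s ++ [false]).length = d := by simp; omega
    have hdt : k + 1 - (s ++ [true]).length = d := by simp; omega
    unfold mart
    rw [hd, hdf, hdt, sum_split D s d]
    have : (2:ℝ) ^ (d+1) = 2 ^ d * 2 := by ring
    rw [this]
    field_simp
    try ring

/-- The martingale is eventually, along `γ`, the indicator of `D (seg γ (k+1))`. -/
lemma mart_seg_eventually (D : List Bool → Prop) (k : ℕ)
    (hD : ∀ u v, u.take (k+1) = v.take (k+1) → (D u ↔ D v))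
    (γ : ℕ → Bool) {l : ℕ} (hl : k + 1 ≤ l) :
    mart D k (seg γ l) = if D (seg γ (k+1)) then 1 else 0 := by
  rw [mart_eq_indicator D k (by rw [seg_length]; exact hl)]
  have : D (seg γ l) ↔ D (seg γ (k+1)) := by
    apply hD
    rw [take_seg γ hl, take_seg γ (le_refl (k+1))]
  rw [if_congr this rfl rfl]

lemma mart_osc (D : List Bool → Prop) (k : ℕ)
    (hD : ∀ u v, u.take (k+1) = v.take (k+1) → (D u ↔ D v)) (γ : ℕ → Bool) :
    osc (mart D k) γ = 0 :=
  osc_eq_zero_of_eventually (mart_mem_Icc D k) (fun l hl => mart_seg_eventually D k hD γ hl)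

lemma mart_psi (D : List Bool → Prop) (k : ℕ)
    (hD : ∀ u v, u.take (k+1) = v.take (k+1) → (D u ↔ D v)) (γ : ℕ → Bool) :
    psi (mart D k) γ = if D (seg γ (k+1)) then 1 else 0 :=
  psi_eq_of_eventually (fun l hl => mart_seg_eventually D k hD γ hl)

end PtwoProof
namespace PtwoProof
open Filter Topology Set

lemma ofFn_succ_append {α : Type*} (g : ℕ → α) (j : ℕ) :
    List.ofFn (fun i : Fin (j+1) => g i) = List.ofFn (fun i : Fin j => g i) ++ [g j] := by
  rw [List.ofFn_succ']
  simp [List.concat_eq_append]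

lemma seg_succ (β : ℕ → Bool) (l : ℕ) : seg β (l+1) = seg β l ++ [β l] :=
  ofFn_succ_append β l

lemma seg_getD (β : ℕ → Bool) {i n : ℕ} (h : i < n) (d : Bool) :
    (seg β n).getD i d = β i := by
  rw [List.getD_eq_getElem _ _ (by rw [seg_length]; exact h), seg_getElem]

lemma bl_length_le (u : List Bool) : (bl u).length ≤ u.length := by
  induction u with
  | nil => simp
  | cons b u ih =>
    cases b
    · simpa using Nat.succ_le_succ ih
    · rcases h : bl u with _ | ⟨a, t⟩
      · rw [bl_true_of_nil h]; simp
      · rw [bl_true_of_cons h]; rw [h] at ih; simpa using Nat.le_succ_of_le ih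

lemma bl_seg_length_mono (γ : ℕ → Bool) {m n : ℕ} (h : m ≤ n) :
    (bl (seg γ m)).length ≤ (bl (seg γ n)).length := by
  obtain ⟨r, hr⟩ := seg_prefix γ h
  obtain ⟨r', hr'⟩ := bl_append_prefix (seg γ m) r
  rw [← hr, hr']
  simp

/-- `x↾j` for `x : ℕ → ℕ`. -/
def xseg (x : ℕ → ℕ) (j : ℕ) : List ℕ := List.ofFn (fun i : Fin j => x i)

lemma xseg_succ (x : ℕ → ℕ) (j : ℕ) : xseg x (j+1) = xseg x j ++ [x j] :=
  ofFn_succ_append x j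

lemma xseg_length (x : ℕ → ℕ) (j : ℕ) : (xseg x j).length = j := by simp [xseg]

/-- The branch of `2^ω` encoding `x : ℕ^ω` by blocks. -/
noncomputable def gam (x : ℕ → ℕ) : ℕ → Bool :=
  fun n => (enc (xseg x (n+1))).getD n false

lemma enc_xseg_length (x : ℕ → ℕ) (j : ℕ) :
    (enc (xseg x j)).length = (xseg x j).sum + j := by
  rw [enc_length, xseg_length]

lemma enc_xseg_prefix (x : ℕ → ℕ) {m n : ℕ} (h : m ≤ n) :
    ∃ r, enc (xseg x n) = enc (xseg x m) ++ r := by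
  induction n with
  | zero =>
    obtain rfl : m = 0 := by omega
    exact ⟨[], by simp⟩
  | succ n ih =>
    rcases Nat.lt_or_ge m (n+1) with h' | h'
    · obtain ⟨r, hr⟩ := ih (by omega)
      exact ⟨r ++ enc [x n], by rw [xseg_succ, enc_append, hr, List.append_assoc]⟩
    · obtain rfl : m = n + 1 := by omega
      exact ⟨[], by simp⟩

lemma gam_stable (x : ℕ → ℕ) {n M : ℕ} (h : n < M) :
    gam x n = (enc (xseg x M)).getD n false := by
  obtain ⟨r, hr⟩ := enc_xseg_prefix x h
  rw [gam, hr, List.getD_append]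
  rw [enc_xseg_length]
  omega

lemma seg_gam (x : ℕ → ℕ) (n : ℕ) :
    seg (gam x) n = (enc (xseg x n)).take n := by
  apply List.ext_getElem
  · rw [seg_length, List.length_take, enc_xseg_length]
    omega
  · intro i h1 h2
    rw [seg_getElem, List.getElem_take]
    have hi : i < n := by rwa [seg_length] at h1
    rw [gam_stable x hi, List.getD_eq_getElem _ _ (by rw [enc_xseg_length]; omega)]

/-- position of the `j`-th `false` in `gam x`. -/
def pos (x : ℕ → ℕ) (j : ℕ) : ℕ := (xseg x (j+1)).sum + j

lemma seg_gam_pos (x : ℕ → ℕ) (j : ℕ) :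
    seg (gam x) (pos x j + 1) = enc (xseg x (j+1)) := by
  have hlen : (enc (xseg x (j+1))).length = pos x j + 1 := by
    rw [enc_xseg_length, pos]; omega
  obtain ⟨r, hr⟩ := enc_xseg_prefix x (show j + 1 ≤ pos x j + 1 by
    have : j ≤ pos x j := by rw [pos]; omega
    omega)
  rw [seg_gam, hr, List.take_append_of_le_length (by omega),
    List.take_of_length_le (by omega)]

lemma gam_pos_false (x : ℕ → ℕ) (j : ℕ) : gam x (pos x j) = false := by
  have h1 : gam x (pos x j) = (seg (gam x) (pos x j + 1)).getD (pos x j) false :=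
    (seg_getD (gam x) (Nat.lt_succ_self _) false).symm
  rw [h1, seg_gam_pos]
  have hsplit : enc (xseg x (j+1)) =
      (enc (xseg x j) ++ List.replicate (x j) true) ++ [false] := by
    rw [xseg_succ, enc_append]
    simp [enc]
  have hplen : (enc (xseg x j) ++ List.replicate (x j) true).length = pos x j := by
    simp [enc_xseg_length, pos, xseg_succ]
    try omega
  rw [hsplit, List.getD_eq_getElem _ _ (by rw [List.length_append, hplen]; simp)]
  exact List.getElem_concat_length hplen.symm _

lemma bl_seg_gam_pos (x : ℕ → ℕ) (j : ℕ) :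
    bl (seg (gam x) (pos x j + 1)) = xseg x (j+1) := by
  rw [seg_gam_pos, bl_enc]

end PtwoProof
namespace PtwoProof
open Filter Topology Set

variable (f : (ℕ → ℕ) → (ℕ → Bool))

/-- `s` is in the tree of attempts to find a preimage of `β` under `f`. -/
def InT (β : ℕ → Bool) (s : List ℕ) : Prop :=
  ∀ i : Fin s.length, ∃ y : ℕ → ℕ, (∀ m : Fin s.length, y m = s.get m) ∧ f y i = β i

lemma forward (β : ℕ → Bool) (x : ℕ → ℕ) (hx : f x = β) (N : ℕ) :
    ∃ k, N ≤ k ∧ (gam x k = false ∧ InT f β (bl (seg (gam x) (k+1)))) := by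
  refine ⟨pos x N, by rw [pos]; omega, gam_pos_false x N, ?_⟩
  rw [bl_seg_gam_pos]
  intro i
  refine ⟨x, fun m => ?_, by rw [hx]⟩
  show x ↑m = (xseg x (N+1)).get m
  simp only [xseg, List.get_ofFn]
  exact (List.get_ofFn (fun i : Fin (N+1) => x i) m).symm

lemma backward (hf : Continuous f) (β : ℕ → Bool) (γ : ℕ → Bool)
    (h : ∀ N, ∃ k, N ≤ k ∧ (γ k = false ∧ InT f β (bl (seg γ (k+1))))) :
    ∃ x, f x = β := by
  classical
  let K : ℕ → ℕ := fun j => Nat.rec (h 0).choose (fun _ prev => (h (prev + 1)).choose) j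
  have hK0 : ∀ j, γ (K j) = false ∧ InT f β (bl (seg γ (K j + 1))) := by
    intro j
    cases j with
    | zero => exact (h 0).choose_spec.2
    | succ j => exact (h (K j + 1)).choose_spec.2
  have hKsucc : ∀ j, K j + 1 ≤ K (j+1) := by
    intro j
    exact (h (K j + 1)).choose_spec.1
  have hKmono : ∀ i j, i ≤ j → K i ≤ K j := by
    intro i j hij
    induction j with
    | zero =>
      obtain rfl : i = 0 := Nat.le_zero.1 hij
      exact le_rfl
    | succ j ih =>
      rcases Nat.lt_or_ge i (j+1) with h' | h'
      · exact le_trans (ih (by omega)) (by have := hKsucc j; omega)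
      · obtain rfl : i = j + 1 := le_antisymm hij h'
        exact le_rfl
  have hlen : ∀ j, j + 1 ≤ (bl (seg γ (K j + 1))).length := by
    intro j
    induction j with
    | zero =>
      rw [seg_succ, (hK0 0).1, bl_concat_false_length]
      omega
    | succ j ih =>
      have e1 : K j + 1 ≤ K (j+1) := hKsucc j
      have e2 := bl_seg_length_mono γ e1
      rw [seg_succ, (hK0 (j+1)).1, bl_concat_false_length]
      omega
  set x : ℕ → ℕ := fun i => (bl (seg γ (K i + 1))).getD i 0 with hxdef
  have hstable : ∀ j i, i ≤ j → x i = (bl (seg γ (K j + 1))).getD i 0 := by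
    intro j i hij
    have h1 : K i + 1 ≤ K j + 1 := by have := hKmono i j hij; omega
    obtain ⟨r, hr⟩ := seg_prefix γ h1
    obtain ⟨r', hr'⟩ := bl_append_prefix (seg γ (K i + 1)) r
    rw [hxdef]
    show (bl (seg γ (K i + 1))).getD i 0 = _
    rw [← hr, hr', List.getD_append]
    have := hlen i
    omega
  refine ⟨x, ?_⟩
  funext i
  have hcont : ContinuousAt (fun y : ℕ → ℕ => f y i) x :=
    ((continuous_apply i).comp hf).continuousAt
  have hU : {y : ℕ → ℕ | f y i = f x i} ∈ 𝓝 x :=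
    hcont ((isOpen_discrete {f x i}).mem_nhds rfl)
  rw [nhds_pi, Filter.mem_pi] at hU
  obtain ⟨I, hIf, t, ht, hsub⟩ := hU
  set n : ℕ := hIf.toFinset.sup id + 1 with hndef
  have hn : ∀ m ∈ I, m < n := by
    intro m hm
    have : m ≤ hIf.toFinset.sup id := Finset.le_sup (f := id) (hIf.mem_toFinset.2 hm)
    omega
  set j : ℕ := n + i with hjdef
  have hl : j + 1 ≤ (bl (seg γ (K j + 1))).length := hlen j
  obtain ⟨y, hy1, hy2⟩ := (hK0 j).2 ⟨i, by omega⟩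
  have hagree : y ∈ I.pi t := by
    intro m hm
    have hmn : m < n := hn m hm
    have hml : m < (bl (seg γ (K j + 1))).length := by omega
    have hym : y m = x m := by
      rw [hy1 ⟨m, hml⟩, hstable j m (by omega), List.get_eq_getElem,
        List.getD_eq_getElem _ _ hml]
    rw [hym]
    exact mem_of_mem_nhds (ht m)
  have hyU : f y i = f x i := hsub hagree
  have : f y i = β i := hy2
  rw [← hyU, this]

end PtwoProof
namespace PtwoProof
open Filter Topology Set MeasureTheory

variable (f : (ℕ → ℕ) → (ℕ → Bool))

/-- The clopen condition determining the `k`-th martingale of the reduction. -/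
def Dk (β : ℕ → Bool) (k : ℕ) (u : List Bool) : Prop :=
  ((u.take (k+1)).getD k true = false) ∧ InT f β (bl (u.take (k+1)))

lemma Dk_take_inv (β : ℕ → Bool) (k : ℕ) (u v : List Bool)
    (h : u.take (k+1) = v.take (k+1)) : Dk f β k u ↔ Dk f β k v := by
  simp only [Dk, h]

lemma Dk_seg (β : ℕ → Bool) (k : ℕ) (γ : ℕ → Bool) :
    Dk f β k (seg γ (k+1)) ↔ (γ k = false ∧ InT f β (bl (seg γ (k+1)))) := by
  simp only [Dk]
  rw [List.take_of_length_le (le_of_eq (seg_length γ (k+1))),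
    seg_getD γ (Nat.lt_succ_self k)]

/-- The reduction map. -/
noncomputable def gred : (ℕ → Bool) → ℕ → Mart :=
  fun β k => ⟨mart (Dk f β k) k,
    mart_isMartingale _ _ (fun u v h => Dk_take_inv f β k u v h)⟩

lemma gred_mem_Ptwo_iff (β : ℕ → Bool) :
    gred f β ∈ Ptwo ↔
      ∀ γ : ℕ → Bool, ∃ N, ∀ k, N ≤ k →
        ¬ (γ k = false ∧ InT f β (bl (seg γ (k+1)))) := by
  constructor
  · intro hP γ
    have h2 := hP.2 γ
    have hlt : ∀ᶠ k in atTop, psi (gred f β k).1 γ < 1 :=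
      h2.eventually_lt_const (by norm_num)
    rw [eventually_atTop] at hlt
    obtain ⟨N, hN⟩ := hlt
    refine ⟨N, fun k hk hcon => ?_⟩
    have hD : Dk f β k (seg γ (k+1)) := (Dk_seg f β k γ).2 hcon
    have : psi (gred f β k).1 γ = 1 := by
      show psi (mart (Dk f β k) k) γ = 1
      rw [mart_psi _ _ (fun u v h => Dk_take_inv f β k u v h), if_pos hD]
    have := hN k hk
    simp_all
  · intro hgood
    constructor
    · intro k β'
      exact mart_osc _ _ (fun u v h => Dk_take_inv f β k u v h) β'
    · intro γ
      obtain ⟨N, hN⟩ := hgood γ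
      apply Tendsto.congr' _ tendsto_const_nhds
      rw [EventuallyEq, eventually_atTop]
      refine ⟨N, fun k hk => ?_⟩
      show (0:ℝ) = psi (mart (Dk f β k) k) γ
      rw [mart_psi _ _ (fun u v h => Dk_take_inv f β k u v h),
        if_neg (fun hD => hN k hk ((Dk_seg f β k γ).1 hD))]

lemma bl_take_length_le (k : ℕ) (u : List Bool) :
    (bl (u.take (k+1))).length ≤ k + 1 :=
  le_trans (bl_length_le _) (by rw [List.length_take]; omega)

lemma Dk_beta_inv (β β' : ℕ → Bool) (k : ℕ) (u : List Bool)
    (h : ∀ i, i < k + 1 → β i = β' i) : Dk f β k u ↔ Dk f β' k u := by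
  simp only [Dk, InT]
  refine and_congr Iff.rfl (forall_congr' fun i => exists_congr fun y =>
    and_congr Iff.rfl ?_)
  rw [h i (lt_of_lt_of_le i.isLt (bl_take_length_le k u))]

lemma gred_continuous : Continuous (gred f) := by
  apply continuous_pi
  intro k
  apply Continuous.subtype_mk
  apply continuous_pi
  intro s
  show Continuous fun β => mart (Dk f β k) k s
  unfold mart
  apply Continuous.div_const
  apply continuous_finset_sum
  intro t _
  classical
  set u := s ++ List.ofFn t with hu
  let ext : (Fin (k+1) → Bool) → (ℕ → Bool) := fun v n => if h : n < k+1 then v ⟨n, h⟩ else false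
  have factor : (fun β : ℕ → Bool => if Dk f β k u then (1:ℝ) else 0)
      = (fun v => if Dk f (ext v) k u then (1:ℝ) else 0) ∘
        (fun β (i : Fin (k+1)) => β ↑i) := by
    funext β
    simp only [Function.comp]
    refine if_congr (Dk_beta_inv f β (ext fun i : Fin (k+1) => β ↑i) k u fun i hi => ?_) rfl rfl
    show β i = if h : i < k+1 then β i else false
    rw [dif_pos hi]
  rw [show (fun β : ℕ → Bool => if Dk f β k (s ++ List.ofFn t) then (1:ℝ) else 0)
    = (fun β : ℕ → Bool => if Dk f β k u then (1:ℝ) else 0) from rfl, factor]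
  exact continuous_of_discreteTopology.comp (continuous_pi fun i => continuous_apply (i : ℕ))

/-- The constant-zero martingale. -/
def zeroMart : Mart :=
  ⟨fun _ => 0, ⟨fun _ => by norm_num, fun _ => by norm_num⟩⟩

lemma zeroMart_mem : (fun _ : ℕ => zeroMart) ∈ Ptwo := by
  constructor
  · intro k β
    exact osc_eq_zero_of_eventually (fun _ => ⟨le_rfl, zero_le_one⟩)
      (N := 0) (c := 0) (fun l _ => rfl)
  · intro β
    have h0 : psi (zeroMart).1 β = 0 :=
      psi_eq_of_eventually (N := 0) (c := 0) (fun l _ => rfl)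
    have : (fun _ : ℕ => psi (zeroMart).1 β) = fun _ : ℕ => (0:ℝ) :=
      funext fun _ => h0
    rw [this]
    exact tendsto_const_nhds

lemma part2 : ∀ A : Set (ℕ → Bool), IsCoanalytic A →
    ∃ g : (ℕ → Bool) → (ℕ → Mart), Continuous g ∧ A = g ⁻¹' Ptwo := by
  intro A hA
  rw [IsCoanalytic, MeasureTheory.AnalyticSet] at hA
  rcases hA with hA | ⟨f, hfc, hfr⟩
  · refine ⟨fun _ _ => zeroMart, continuous_const, ?_⟩
    have hA' : A = univ := by
      rw [← compl_compl A, hA, Set.compl_empty]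
    rw [hA']
    ext β
    simp only [Set.mem_univ, Set.mem_preimage, true_iff]
    exact zeroMart_mem
  · refine ⟨gred f, gred_continuous f, ?_⟩
    ext β
    rw [Set.mem_preimage, gred_mem_Ptwo_iff]
    constructor
    · intro hβ γ
      by_contra hcon
      push_neg at hcon
      obtain ⟨x, hx⟩ := backward f hfc β γ hcon
      have hmem : β ∈ Set.range f := ⟨x, hx⟩
      rw [hfr] at hmem
      exact hmem hβ
    · intro hg
      by_contra hβ
      have hmem : β ∈ Set.range f := by
        rw [hfr]; exact hβ
      obtain ⟨x, hx⟩ := hmem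
      obtain ⟨N, hN⟩ := hg (gam x)
      obtain ⟨k, hk1, hk2⟩ := forward f β x hx N
      exact hN k hk1 hk2

end PtwoProof
namespace PtwoProof
open MeasureTheory Filter Topology Set

lemma isClosed_isMartingale : IsClosed {f : List Bool → ℝ | IsMartingale f} := by
  have hset : {f : List Bool → ℝ | IsMartingale f} =
      (⋂ s : List Bool, {f | f s ∈ Set.Icc (0:ℝ) 1}) ∩
      (⋂ s : List Bool, {f | f s = (f (s ++ [false]) + f (s ++ [true])) / 2}) := by
    ext g
    simp only [Set.mem_setOf_eq, Set.mem_inter_iff, Set.mem_iInter, IsMartingale]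
  rw [hset]
  apply IsClosed.inter
  · exact isClosed_iInter fun s => IsClosed.preimage (continuous_apply s) isClosed_Icc
  · exact isClosed_iInter fun s => isClosed_eq (continuous_apply s)
      (((continuous_apply (s ++ [false])).add (continuous_apply (s ++ [true]))).div_const 2)

instance : PolishSpace Mart :=
  IsClosed.polishSpace isClosed_isMartingale

/-- The ambient product space for the coanalyticity argument. -/
abbrev ZZ : Type := (ℕ → Mart) × (ℕ → Bool)

/-- evaluation maps -/
def ev (k l : ℕ) (z : ZZ) : ℝ := (z.1 k).1 (seg z.2 l)

/-- `𝓟₂` is coanalytic. -/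
theorem part1 : IsCoanalytic Ptwo := by
  classical
  rw [IsCoanalytic]
  borelize ZZ
  have hev : ∀ k l, Measurable (ev k l) := by
    intro k l
    have hrep : ev k l = fun z =>
        ∑ v : Fin l → Bool, if (∀ i : Fin l, z.2 i = v i)
          then (z.1 k).1 (List.ofFn v) else 0 := by
      funext z
      rw [Finset.sum_eq_single (fun i : Fin l => z.2 i)]
      · rw [if_pos (fun i => rfl)]
        rfl
      · intro v _ hv
        rw [if_neg]
        intro hcon
        exact hv (funext fun i => (hcon i).symm)
      · intro hmem
        exact absurd (Finset.mem_univ _) hmem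
    rw [hrep]
    apply Finset.measurable_sum
    intro v _
    apply Measurable.ite
    · have h1 : {z : ZZ | ∀ i : Fin l, z.2 i = v i} = ⋂ i : Fin l, {z | z.2 i = v i} := by
        ext z; simp
      rw [h1]
      apply MeasurableSet.iInter
      intro i
      have hc : Continuous fun z : ZZ => z.2 (i:ℕ) :=
        (continuous_apply (i:ℕ)).comp continuous_snd
      have h2 : IsOpen {z : ZZ | z.2 i = v i} := (isOpen_discrete {v i}).preimage hc
      exact h2.measurableSet
    · have hc2 : Continuous fun z : ZZ => (z.1 k).1 (List.ofFn v) :=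
        (continuous_apply (List.ofFn v)).comp
          (continuous_subtype_val.comp ((continuous_apply k).comp continuous_fst))
      exact hc2.measurable
    · exact measurable_const
  have hm1 : MeasurableSet {z : ZZ | ∀ k m : ℕ, ∃ N : ℕ, ∀ p, N ≤ p → ∀ q, N ≤ q →
      |ev k p z - ev k q z| ≤ 1/((m:ℝ)+1)} := by
    have h1 : {z : ZZ | ∀ k m : ℕ, ∃ N : ℕ, ∀ p, N ≤ p → ∀ q, N ≤ q →
        |ev k p z - ev k q z| ≤ 1/((m:ℝ)+1)} =
      ⋂ k : ℕ, ⋂ m : ℕ, ⋃ N : ℕ, ⋂ p : ℕ, ⋂ (_ : N ≤ p), ⋂ q : ℕ, ⋂ (_ : N ≤ q),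
        {z : ZZ | |ev k p z - ev k q z| ≤ 1/((m:ℝ)+1)} := by
      ext z
      simp only [Set.mem_setOf_eq, Set.mem_iInter, Set.mem_iUnion]
    rw [h1]
    refine MeasurableSet.iInter fun k => MeasurableSet.iInter fun m =>
      MeasurableSet.iUnion fun N => MeasurableSet.iInter fun p =>
        MeasurableSet.iInter fun _ => MeasurableSet.iInter fun q =>
          MeasurableSet.iInter fun _ => ?_
    exact measurableSet_le ((hev k p).sub (hev k q)).abs measurable_const
  have hm2 : MeasurableSet {z : ZZ | ∀ m : ℕ, ∃ N : ℕ, ∀ k, N ≤ k → ∃ L : ℕ, ∀ l, L ≤ l →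
      ev k l z < 1/((m:ℝ)+1)} := by
    have h2 : {z : ZZ | ∀ m : ℕ, ∃ N : ℕ, ∀ k, N ≤ k → ∃ L : ℕ, ∀ l, L ≤ l →
        ev k l z < 1/((m:ℝ)+1)} =
      ⋂ m : ℕ, ⋃ N : ℕ, ⋂ k : ℕ, ⋂ (_ : N ≤ k), ⋃ L : ℕ, ⋂ l : ℕ, ⋂ (_ : L ≤ l),
        {z : ZZ | ev k l z < 1/((m:ℝ)+1)} := by
      ext z
      simp only [Set.mem_setOf_eq, Set.mem_iInter, Set.mem_iUnion]
    rw [h2]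
    refine MeasurableSet.iInter fun m => MeasurableSet.iUnion fun N =>
      MeasurableSet.iInter fun k => MeasurableSet.iInter fun _ =>
        MeasurableSet.iUnion fun L => MeasurableSet.iInter fun l =>
          MeasurableSet.iInter fun _ => ?_
    exact measurableSet_lt (hev k l) measurable_const
  have hBmeas : MeasurableSet
      ({z : ZZ | ∀ k m : ℕ, ∃ N : ℕ, ∀ p, N ≤ p → ∀ q, N ≤ q →
          |ev k p z - ev k q z| ≤ 1/((m:ℝ)+1)} ∩
       {z : ZZ | ∀ m : ℕ, ∃ N : ℕ, ∀ k, N ≤ k → ∃ L : ℕ, ∀ l, L ≤ l →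
          ev k l z < 1/((m:ℝ)+1)}) := hm1.inter hm2
  have hPt : ∀ F : ℕ → Mart, F ∈ Ptwo ↔ ∀ β : ℕ → Bool,
      ((F, β) : ZZ) ∈
        ({z : ZZ | ∀ k m : ℕ, ∃ N : ℕ, ∀ p, N ≤ p → ∀ q, N ≤ q →
            |ev k p z - ev k q z| ≤ 1/((m:ℝ)+1)} ∩
         {z : ZZ | ∀ m : ℕ, ∃ N : ℕ, ∀ k, N ≤ k → ∃ L : ℕ, ∀ l, L ≤ l →
            ev k l z < 1/((m:ℝ)+1)}) := by
    intro F
    have key : ∀ β : ℕ → Bool, (∀ k, osc (F k).1 β = 0) →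
        (Tendsto (fun k => psi (F k).1 β) atTop (𝓝 (0:ℝ)) ↔
          (∀ m : ℕ, ∃ N : ℕ, ∀ k, N ≤ k → ∃ L : ℕ, ∀ l, L ≤ l →
            (F k).1 (seg β l) < 1/((m:ℝ)+1))) := by
      intro β hosc
      constructor
      · intro hT m
        have hmp : (0:ℝ) < 1/((m:ℝ)+1) := by positivity
        have h3 := hT.eventually_lt_const hmp
        rw [eventually_atTop] at h3
        obtain ⟨N, hN⟩ := h3
        refine ⟨N, fun k hk => ?_⟩
        have hseq := tendsto_psi_of_osc_eq_zero (F k).2.1 (hosc k)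
        have h4 := hseq.eventually_lt_const (hN k hk)
        rw [eventually_atTop] at h4
        exact h4
      · intro h
        rw [Metric.tendsto_atTop]
        intro ε hε
        obtain ⟨m, hm⟩ := exists_nat_one_div_lt hε
        obtain ⟨N, hN⟩ := h m
        refine ⟨N, fun k hk => ?_⟩
        obtain ⟨L, hL⟩ := hN k hk
        have hseq := tendsto_psi_of_osc_eq_zero (F k).2.1 (hosc k)
        have hle : psi (F k).1 β ≤ 1/((m:ℝ)+1) :=
          le_of_tendsto hseq (eventually_atTop.2 ⟨L, fun l hl => (hL l hl).le⟩)
        have hge : 0 ≤ psi (F k).1 β :=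
          ge_of_tendsto hseq (eventually_atTop.2 ⟨0, fun l _ => ((F k).2.1 _).1⟩)
        rw [Real.dist_eq, sub_zero, abs_of_nonneg hge]
        exact lt_of_le_of_lt hle hm
    constructor
    · intro hF β
      have hosc : ∀ k, osc (F k).1 β = 0 := fun k => hF.1 k β
      exact ⟨fun k m => (osc_eq_zero_iff (F k).2.1).1 (hosc k) m,
        (key β hosc).1 (hF.2 β)⟩
    · intro hBmem
      have hosc : ∀ β : ℕ → Bool, ∀ k, osc (F k).1 β = 0 := fun β k =>
        (osc_eq_zero_iff (F k).2.1).2 (fun m => (hBmem β).1 k m)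
      exact ⟨fun k β => hosc β k, fun β => (key β (hosc β)).2 ((hBmem β).2)⟩
  have hcompl : Ptwoᶜ = Prod.fst ''
      ({z : ZZ | ∀ k m : ℕ, ∃ N : ℕ, ∀ p, N ≤ p → ∀ q, N ≤ q →
          |ev k p z - ev k q z| ≤ 1/((m:ℝ)+1)} ∩
       {z : ZZ | ∀ m : ℕ, ∃ N : ℕ, ∀ k, N ≤ k → ∃ L : ℕ, ∀ l, L ≤ l →
          ev k l z < 1/((m:ℝ)+1)})ᶜ := by
    ext F
    simp only [Set.mem_compl_iff, Set.mem_image]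
    constructor
    · intro hF
      rw [hPt F] at hF
      push_neg at hF
      obtain ⟨β, hβ⟩ := hF
      exact ⟨(F, β), hβ, rfl⟩
    · rintro ⟨⟨F', β⟩, hz, rfl⟩ hF
      exact hz ((hPt F').1 hF β)
  rw [hcompl]
  haveI : PolishSpace (ℕ → Bool) := by
    haveI := TopologicalSpace.IsCompletelyMetrizableSpace.pi_countable (ι := ℕ) (X := fun _ => Bool)
    infer_instance
  exact hBmeas.compl.analyticSet.image_of_continuous continuous_fst

end PtwoProof


/-- `𝓟₂` is `Π¹₁`-complete. -/
theorem Ptwo_coanalytic_complete :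
    IsCoanalytic Ptwo ∧
    ∀ A : Set (ℕ → Bool), IsCoanalytic A →
      ∃ g : (ℕ → Bool) → (ℕ → Mart), Continuous g ∧ A = g ⁻¹' Ptwo := by
  exact ⟨PtwoProof.part1, PtwoProof.part2⟩
end
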